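/- arXiv:2009.11381 — 2 statements merged into one kernel-verified Lean document; each statement's English description precedes it below -/
import Mathlib

section
/- Let G' be the Type A Whitney flip of a simple graph G along (H, v1, v2), and let φ be the map sending each edge {x, y} of G with both endpoints in H to {σ(x), σ(y)} and fixing every other edge of G. Then φ is a bijection from the edge set of G onto the edge set of G', and a set C of edges of G is the edge set of a cycle of G if and only if φ(C) is the edge set of a cycle of G'. In particular, for every integer k, G has a cycle of length k if and only if G' has a cycle of length k. -/
open SimpleGraph

attribute [local instance] Classical.propDecidable

/-- The Type A Whitney flip of `G` along `(H, v1, v2)`: edges with both endpoints in `H`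
are mapped by the swap of `v1` and `v2`; all other edges are kept. -/
def typeAFlip {V : Type*} [DecidableEq V] (G : SimpleGraph V) (v1 v2 : V) (H : Set V) :
    SimpleGraph V where
  Adj a b :=
    (Equiv.swap v1 v2 a ∈ H ∧ Equiv.swap v1 v2 b ∈ H ∧
      G.Adj (Equiv.swap v1 v2 a) (Equiv.swap v1 v2 b)) ∨
    (¬(a ∈ H ∧ b ∈ H) ∧ G.Adj a b)
  symm := by
    constructor
    rintro a b (⟨ha, hb, h⟩ | ⟨hn, h⟩)
    · exact Or.inl ⟨hb, ha, h.symm⟩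
    · exact Or.inr ⟨fun ⟨hb', ha'⟩ => hn ⟨ha', hb'⟩, h.symm⟩
  loopless := by
    constructor
    rintro a (⟨_, _, h⟩ | ⟨_, h⟩) <;> exact G.loopless.irrefl _ h

/-- The edge map of the Type A Whitney flip: an edge with both endpoints in `H` is mapped
by the swap of `v1` and `v2`; every other edge is fixed. -/
noncomputable def phiA {V : Type*} [DecidableEq V] (v1 v2 : V) (H : Set V)
    (e : Sym2 V) : Sym2 V :=
  if ∀ x ∈ e, x ∈ H then e.map (Equiv.swap v1 v2) else e

section Aux
variable {V : Type*} [DecidableEq V] {G : SimpleGraph V} {v1 v2 : V} {H : Set V}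

lemma swap_mem_H (h1 : v1 ∈ H) (h2 : v2 ∈ H) (x : V) :
    Equiv.swap v1 v2 x ∈ H ↔ x ∈ H := by
  rcases eq_or_ne x v1 with rfl | hx1
  · simp [Equiv.swap_apply_left, h1, h2]
  rcases eq_or_ne x v2 with rfl | hx2
  · simp [Equiv.swap_apply_right, h1, h2]
  · rw [Equiv.swap_apply_of_ne_of_ne hx1 hx2]

lemma sym2_swap_mem_H (h1 : v1 ∈ H) (h2 : v2 ∈ H) {e : Sym2 V} (he : ∀ x ∈ e, x ∈ H) :
    ∀ x ∈ e.map (Equiv.swap v1 v2), x ∈ H := by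
  intro x hx
  obtain ⟨y, hy, rfl⟩ := Sym2.mem_map.mp hx
  exact (swap_mem_H h1 h2 y).mpr (he y hy)

lemma phiA_inside {e : Sym2 V} (he : ∀ x ∈ e, x ∈ H) :
    phiA v1 v2 H e = e.map (Equiv.swap v1 v2) := if_pos he

lemma phiA_outside {e : Sym2 V} (he : ¬ ∀ x ∈ e, x ∈ H) : phiA v1 v2 H e = e := if_neg he

lemma sym2_swap_swap (e : Sym2 V) :
    (e.map (Equiv.swap v1 v2)).map (Equiv.swap v1 v2) = e := by
  rw [Sym2.map_map]
  have : (Equiv.swap v1 v2) ∘ (Equiv.swap v1 v2) = id := by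
    funext x; simp
  simp [this]

lemma phiA_invol (h1 : v1 ∈ H) (h2 : v2 ∈ H) (e : Sym2 V) :
    phiA v1 v2 H (phiA v1 v2 H e) = e := by
  by_cases he : ∀ x ∈ e, x ∈ H
  · rw [phiA_inside he, phiA_inside (sym2_swap_mem_H h1 h2 he), sym2_swap_swap]
  · rw [phiA_outside he, phiA_outside he]

lemma phiA_injective (h1 : v1 ∈ H) (h2 : v2 ∈ H) :
    Function.Injective (phiA v1 v2 H) :=
  Function.LeftInverse.injective (g := phiA v1 v2 H) (phiA_invol h1 h2)

/-- adjacency of the flip, rephrased using that the swap preserves `H`. -/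
lemma flip_adj (h1 : v1 ∈ H) (h2 : v2 ∈ H) (a b : V) :
    (typeAFlip G v1 v2 H).Adj a b ↔
      (a ∈ H ∧ b ∈ H ∧ G.Adj (Equiv.swap v1 v2 a) (Equiv.swap v1 v2 b)) ∨
      (¬(a ∈ H ∧ b ∈ H) ∧ G.Adj a b) := by
  show _ ∨ _ ↔ _
  rw [swap_mem_H h1 h2, swap_mem_H h1 h2]

lemma phiA_mem_flip_edgeSet (h1 : v1 ∈ H) (h2 : v2 ∈ H) {e : Sym2 V}
    (he : e ∈ G.edgeSet) : phiA v1 v2 H e ∈ (typeAFlip G v1 v2 H).edgeSet := by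
  induction e with
  | _ x y =>
    by_cases hxy : ∀ z ∈ s(x, y), z ∈ H
    · rw [phiA_inside hxy, Sym2.map_pair_eq]
      have hx : x ∈ H := hxy x (by simp)
      have hy : y ∈ H := hxy y (by simp)
      refine Or.inl ⟨?_, ?_, ?_⟩ <;>
        simp [Equiv.swap_apply_self, hx, hy, G.mem_edgeSet.mp he]
    · rw [phiA_outside hxy]
      refine Or.inr ⟨?_, he⟩
      intro ⟨hx, hy⟩
      exact hxy (by intro z hz; rcases Sym2.mem_iff.mp hz with rfl | rfl <;> assumption)

lemma phiA_mem_G_edgeSet (h1 : v1 ∈ H) (h2 : v2 ∈ H) {e : Sym2 V}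
    (he : e ∈ (typeAFlip G v1 v2 H).edgeSet) : phiA v1 v2 H e ∈ G.edgeSet := by
  induction e with
  | _ x y =>
    rcases (flip_adj h1 h2 x y).mp he with ⟨hx, hy, hadj⟩ | ⟨hn, hadj⟩
    · rw [phiA_inside (by intro z hz; rcases Sym2.mem_iff.mp hz with rfl | rfl <;> assumption)]
      exact hadj
    · rw [phiA_outside (fun hall => hn ⟨hall x (by simp), hall y (by simp)⟩)]
      exact hadj

end Aux
section Aux2
variable {V : Type*} [DecidableEq V] {G : SimpleGraph V} {v1 v2 : V} {H : Set V}

lemma mem_pair_H {x y : V} : (∀ z ∈ s(x, y), z ∈ H) ↔ x ∈ H ∧ y ∈ H := by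
  constructor
  · intro h; exact ⟨h x (by simp), h y (by simp)⟩
  · rintro ⟨hx, hy⟩ z hz; rcases Sym2.mem_iff.mp hz with rfl | rfl <;> assumption

/-- An endpoint in `H` of a non-inside edge must be `v1` or `v2`. -/
lemma boundary_vertex
    (hHedge : ∀ x y : V, G.Adj x y → x ∈ H \ ({v1, v2} : Set V) → y ∈ H)
    {x y : V} (hadj : G.Adj x y) (hx : x ∈ H) (hn : ¬ ∀ z ∈ s(x, y), z ∈ H) :
    x ∈ ({v1, v2} : Set V) := by
  by_contra hxv
  exact hn (mem_pair_H.mpr ⟨hx, hHedge x y hadj ⟨hx, hxv⟩⟩)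

/-- Along a path whose non-final vertices avoid `v1, v2`, all edges have the same
"inside H" status as a given edge entering the path. -/
lemma uniform_kind
    (hHedge : ∀ x y : V, G.Adj x y → x ∈ H \ ({v1, v2} : Set V) → y ∈ H) :
    ∀ {b c : V} (p : G.Walk b c) {a : V}, G.Adj a b → p.support.Nodup →
      (∀ x ∈ p.support, x ≠ c → x ∉ ({v1, v2} : Set V)) →
      ∀ e ∈ p.edges, ((∀ z ∈ e, z ∈ H) ↔ (∀ z ∈ s(a, b), z ∈ H)) := by
  intro b c p
  induction p with
  | nil => intro a _ _ _ e he; simp at he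
  | @cons b d c h' q ih =>
    intro a h hnd hI e he
    have hbc : b ≠ c := by
      have hbd : b ∉ q.support := by
        simpa using (List.nodup_cons.mp (by simpa using hnd)).1
      intro hbceq; exact hbd (hbceq ▸ q.end_mem_support)
    have hbv : b ∉ ({v1, v2} : Set V) := hI b (by simp) hbc
    have key : (∀ z ∈ s(b, d), z ∈ H) ↔ (∀ z ∈ s(a, b), z ∈ H) := by
      constructor
      · intro hbd
        by_contra hab
        exact hbv (boundary_vertex hHedge h.symm (mem_pair_H.mp hbd).1
          (fun hall => hab (mem_pair_H.mpr ⟨(mem_pair_H.mp hall).2, (mem_pair_H.mp hall).1⟩)))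
      · intro hab
        by_contra hbd
        exact hbv (boundary_vertex hHedge h' ((mem_pair_H.mp hab).2) hbd)
    rcases (by simpa using he : e = s(b, d) ∨ e ∈ q.edges) with rfl | he'
    · exact key
    · have hnd' : q.support.Nodup := (List.nodup_cons.mp (by simpa using hnd)).2
      have hI' : ∀ x ∈ q.support, x ≠ c → x ∉ ({v1, v2} : Set V) := fun x hx hxc =>
        hI x (by simp [hx]) hxc
      exact (ih h' hnd' hI' e he').trans key
end Aux2
section Aux3
variable {V : Type*} [DecidableEq V] {G : SimpleGraph V} {v1 v2 : V} {H : Set V}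

lemma support_tail_concat {a b : V} (hab : a ≠ b) (p : G.Walk a b) :
    ∃ l : List V, p.support.tail = l ++ [b] := by
  have hrev : p.support = p.reverse.support.reverse := by
    rw [Walk.support_reverse, List.reverse_reverse]
  have hs : p.support = p.reverse.support.tail.reverse ++ [b] := by
    conv_lhs => rw [hrev, p.reverse.support_eq_cons]
    rw [List.reverse_cons]
  cases h : p.reverse.support.tail.reverse with
  | nil =>
    rw [h] at hs
    simp only [List.nil_append] at hs
    have h2 : a :: p.support.tail = [b] := by rw [← p.support_eq_cons, hs]
    simp only [List.cons.injEq] at h2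
    exact absurd h2.1 hab
  | cons y t =>
    rw [h] at hs
    have h2 : a :: p.support.tail = y :: (t ++ [b]) := by
      rw [← p.support_eq_cons, hs, List.cons_append]
    exact ⟨t, (List.cons_eq_cons.mp h2).2⟩

lemma split_facts (hne : v1 ≠ v2) (c2 : G.Walk v1 v1) (hc2 : c2.IsCycle)
    (hv2 : v2 ∈ c2.support) :
    ∃ l m : List V,
      (c2.takeUntil v2 hv2).support = v1 :: (l ++ [v2]) ∧
      (c2.dropUntil v2 hv2).support = v2 :: (m ++ [v1]) ∧
      (∀ x ∈ l, x ∉ ({v1, v2} : Set V)) ∧ (∀ x ∈ m, x ∉ ({v1, v2} : Set V)) ∧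
      ((l ++ [v2]) ++ (m ++ [v1])).Nodup := by
  classical
  set P := c2.takeUntil v2 hv2 with hP
  set Q := c2.dropUntil v2 hv2 with hQ
  have hspec : P.append Q = c2 := c2.take_spec hv2
  have htail : c2.support.tail = P.support.tail ++ Q.support.tail := by
    rw [← hspec, Walk.tail_support_append]
  have hnd : (P.support.tail ++ Q.support.tail).Nodup := by
    rw [← htail]; exact ((Walk.isCycle_def _).mp hc2).2.2
  obtain ⟨l, hPt⟩ := support_tail_concat hne P
  obtain ⟨m, hQt⟩ := support_tail_concat hne.symm Q
  rw [hPt, hQt] at hnd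
  have hndP : (l ++ [v2]).Nodup := (List.nodup_append.mp hnd).1
  have hndQ : (m ++ [v1]).Nodup := (List.nodup_append.mp hnd).2.1
  have hdisj : List.Disjoint (l ++ [v2]) (m ++ [v1]) := List.disjoint_of_nodup_append hnd
  refine ⟨l, m, ?_, ?_, ?_, ?_, hnd⟩
  · rw [P.support_eq_cons, hPt]
  · rw [Q.support_eq_cons, hQt]
  · intro x hx hmem
    rcases hmem with rfl | rfl
    · exact hdisj (List.mem_append_left _ hx) (by simp)
    · exact (List.disjoint_of_nodup_append hndP) hx (by simp)
  · intro x hx hmem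
    rcases hmem with rfl | rfl
    · exact (List.disjoint_of_nodup_append hndQ) hx (by simp)
    · exact hdisj (by simp) (List.mem_append_left _ hx)
end Aux3

section Aux4
variable {V : Type*} [DecidableEq V] {G : SimpleGraph V} {v1 v2 : V} {H : Set V}

def insideG (G : SimpleGraph V) (H : Set V) : SimpleGraph V where
  Adj a b := a ∈ H ∧ b ∈ H ∧ G.Adj a b
  symm := by constructor; rintro a b ⟨ha, hb, h⟩; exact ⟨hb, ha, h.symm⟩
  loopless := by constructor; rintro a ⟨_, _, h⟩; exact G.loopless.irrefl a h

def swapHom (G : SimpleGraph V) (v1 v2 : V) (H : Set V) :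
    insideG G H →g typeAFlip G v1 v2 H where
  toFun := Equiv.swap v1 v2
  map_rel' := by
    rintro a b ⟨ha, hb, h⟩
    exact Or.inl ⟨by rwa [Equiv.swap_apply_self], by rwa [Equiv.swap_apply_self],
      by rwa [Equiv.swap_apply_self, Equiv.swap_apply_self]⟩

@[simp] lemma swapHom_coe :
    ⇑(swapHom G v1 v2 H) = ⇑(Equiv.swap v1 v2) := rfl

lemma mem_insideG_edgeSet {e : Sym2 V} (heG : e ∈ G.edgeSet) (hin : ∀ z ∈ e, z ∈ H) :
    e ∈ (insideG G H).edgeSet := by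
  induction e with
  | _ x y => exact ⟨(mem_pair_H.mp hin).1, (mem_pair_H.mp hin).2, heG⟩

lemma mem_flip_outside {e : Sym2 V} (heG : e ∈ G.edgeSet) (hout : ¬ ∀ z ∈ e, z ∈ H) :
    e ∈ (typeAFlip G v1 v2 H).edgeSet := by
  induction e with
  | _ x y => exact Or.inr ⟨fun hab => hout (mem_pair_H.mpr hab), heG⟩

lemma mixedCase (hne : v1 ≠ v2) (h1 : v1 ∈ H) (h2 : v2 ∈ H)
    (c2 : G.Walk v1 v1) (hc2 : c2.IsCycle) (hv2 : v2 ∈ c2.support)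
    (hPin : ∀ e ∈ (c2.takeUntil v2 hv2).edges, ∀ z ∈ e, z ∈ H)
    (hQout : ∀ e ∈ (c2.dropUntil v2 hv2).edges, ¬ ∀ z ∈ e, z ∈ H) :
    ∃ u' : V, ∃ c' : (typeAFlip G v1 v2 H).Walk u' u', c'.IsCycle ∧
      c'.edges.Perm (c2.edges.map (phiA v1 v2 H)) := by
  classical
  set P := c2.takeUntil v2 hv2 with hPdef
  set Q := c2.dropUntil v2 hv2 with hQdef
  have hspec : P.append Q = c2 := c2.take_spec hv2
  obtain ⟨l, m, hPs, hQs, hl, hm, hnd⟩ := split_facts hne c2 hc2 hv2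
  have hPGH : ∀ e ∈ P.edges, e ∈ (insideG G H).edgeSet := fun e he =>
    mem_insideG_edgeSet (P.edges_subset_edgeSet he) (hPin e he)
  have hQG' : ∀ e ∈ Q.reverse.edges, e ∈ (typeAFlip G v1 v2 H).edgeSet := by
    intro e he
    rw [Q.edges_reverse, List.mem_reverse] at he
    exact mem_flip_outside (Q.edges_subset_edgeSet he) (hQout e he)
  let PH := P.transfer (insideG G H) hPGH
  let σP : (typeAFlip G v1 v2 H).Walk v2 v1 :=
    (PH.map (swapHom G v1 v2 H)).copy (Equiv.swap_apply_left v1 v2) (Equiv.swap_apply_right v1 v2)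
  let QR := (Q.reverse).transfer (typeAFlip G v1 v2 H) hQG'
  let c' : (typeAFlip G v1 v2 H).Walk v2 v2 := σP.append QR
  have hσPs : σP.support = P.support.map (Equiv.swap v1 v2) := by
    dsimp only [σP, PH]
    exact (Walk.support_copy _ _ _).trans (by rw [Walk.support_map, Walk.support_transfer]; rfl)
  have hσPe : σP.edges = P.edges.map (Sym2.map (Equiv.swap v1 v2)) := by
    dsimp only [σP, PH]
    exact (Walk.edges_copy _ _ _).trans (by rw [Walk.edges_map, Walk.edges_transfer]; rfl)
  have hQRs : QR.support = Q.support.reverse := by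
    simp [QR, Walk.support_transfer, Walk.support_reverse]
  have hQRe : QR.edges = Q.edges.reverse := by
    simp [QR, Walk.edges_transfer, Walk.edges_reverse]
  have hmapl : l.map (Equiv.swap v1 v2) = l := by
    have h' : l.map (Equiv.swap v1 v2) = l.map id := by
      refine List.map_congr_left ?_
      intro x hx
      have hx' := hl x hx
      simp only [Set.mem_insert_iff, Set.mem_singleton_iff, not_or] at hx'
      exact Equiv.swap_apply_of_ne_of_ne hx'.1 hx'.2
    rw [h', List.map_id]
  have hσPsupp : σP.support = v2 :: (l ++ [v1]) := by
    rw [hσPs, hPs]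
    simp [hmapl]
  have hQRsupp : QR.support = v1 :: (m.reverse ++ [v2]) := by
    rw [hQRs, hQs]
    simp
  have hedgnd : (P.edges ++ Q.edges).Nodup := by
    have ht := (Walk.isTrail_def _).mp ((Walk.isCycle_def _).mp hc2).1
    rwa [← hspec, Walk.edges_append] at ht
  refine ⟨v2, c', ?_, ?_⟩
  · rw [Walk.isCycle_def]
    refine ⟨?_, ?_, ?_⟩
    · rw [Walk.isTrail_def, Walk.edges_append, hσPe, hQRe]
      refine List.Nodup.append ?_ ?_ ?_
      · exact (List.nodup_append.mp hedgnd).1.map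
          (Sym2.map.injective (Equiv.swap v1 v2).injective)
      · exact List.nodup_reverse.mpr (List.nodup_append.mp hedgnd).2.1
      · intro e he he'
        obtain ⟨e0, he0, rfl⟩ := List.mem_map.mp he
        exact hQout _ (List.mem_reverse.mp he') (sym2_swap_mem_H h1 h2 (hPin e0 he0))
    · intro hnil
      have hlen0 : c'.length = 0 := by rw [hnil]; rfl
      have hσlen : σP.length = P.length := by
        dsimp only [σP, PH]
        exact (Walk.length_copy _ _ _).trans (by rw [Walk.length_map, Walk.length_transfer])
      have : σP.length + QR.length = 0 := by
        rw [← Walk.length_append]; exact hlen0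
      rw [hσlen] at this
      have hP0 : P.length = 0 := by omega
      exact hne (Walk.eq_of_length_eq_zero hP0)
    · have hct : c'.support.tail = (l ++ [v1]) ++ (m.reverse ++ [v2]) := by
        show (σP.append QR).support.tail = _
        rw [Walk.tail_support_append, hσPsupp, hQRsupp]
        rfl
      rw [hct]
      refine (List.Perm.nodup_iff ?_).mpr hnd
      refine Multiset.coe_eq_coe.mp ?_
      push_cast
      simp only [← Multiset.coe_add, Multiset.coe_reverse]
      abel_nf
  · have hc2e : c2.edges = P.edges ++ Q.edges := by rw [← hspec, Walk.edges_append]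
    have hmP : P.edges.map (phiA v1 v2 H) = P.edges.map (Sym2.map (Equiv.swap v1 v2)) :=
      List.map_congr_left (fun e he => phiA_inside (hPin e he))
    have hmQ : Q.edges.map (phiA v1 v2 H) = Q.edges := by
      have h' : Q.edges.map (phiA v1 v2 H) = Q.edges.map id :=
        List.map_congr_left (fun e he => phiA_outside (hQout e he))
      rw [h', List.map_id]
    show (σP.append QR).edges.Perm _
    rw [Walk.edges_append, hσPe, hQRe, hc2e, List.map_append, hmP, hmQ]
    exact List.Perm.append_left _ (List.reverse_perm _)
end Aux4

section Aux5
variable {V : Type*} [DecidableEq V] {G : SimpleGraph V} {v1 v2 : V} {H : Set V}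

lemma path_uniform
    (hHedge : ∀ x y : V, G.Adj x y → x ∈ H \ ({v1, v2} : Set V) → y ∈ H)
    {a b : V} (p : G.Walk a b) (lp : List V)
    (hsup : p.support = a :: (lp ++ [b])) (hndl : (lp ++ [b]).Nodup)
    (hlp : ∀ x ∈ lp, x ∉ ({v1, v2} : Set V)) :
    ∀ e1 ∈ p.edges, ∀ e2 ∈ p.edges, ((∀ z ∈ e1, z ∈ H) ↔ (∀ z ∈ e2, z ∈ H)) := by
  cases p with
  | nil => intro e1 he1; simp at he1
  | @cons _ d _ h q =>
    have hq : q.support = lp ++ [b] := by simpa using hsup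
    have hndq : q.support.Nodup := hq ▸ hndl
    have hI : ∀ x ∈ q.support, x ≠ b → x ∉ ({v1, v2} : Set V) := by
      intro x hx hxb
      rw [hq] at hx
      rcases List.mem_append.mp hx with hx' | hx'
      · exact hlp x hx'
      · simp at hx'; exact absurd hx' hxb
    have hu := uniform_kind hHedge q h hndq hI
    intro e1 he1 e2 he2
    rcases (by simpa using he1 : e1 = s(a, d) ∨ e1 ∈ q.edges) with rfl | he1' <;>
      rcases (by simpa using he2 : e2 = s(a, d) ∨ e2 ∈ q.edges) with rfl | he2'
    · exact Iff.rfl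
    · exact (hu e2 he2').symm
    · exact hu e1 he1'
    · exact (hu e1 he1').trans (hu e2 he2').symm

lemma closed_uniform
    (hHedge : ∀ x y : V, G.Adj x y → x ∈ H \ ({v1, v2} : Set V) → y ∈ H)
    {u : V} (c : G.Walk u u) (hc : c.IsCycle)
    (hI : ∀ x ∈ c.support, x ≠ u → x ∉ ({v1, v2} : Set V)) :
    ∀ e1 ∈ c.edges, ∀ e2 ∈ c.edges, ((∀ z ∈ e1, z ∈ H) ↔ (∀ z ∈ e2, z ∈ H)) := by
  cases c with
  | nil => intro e1 he1; simp at he1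
  | @cons _ d _ h q =>
    have hndq : q.support.Nodup := by
      have := ((Walk.isCycle_def _).mp hc).2.2
      simpa using this
    have hI' : ∀ x ∈ q.support, x ≠ u → x ∉ ({v1, v2} : Set V) := fun x hx =>
      hI x (by simp [hx])
    have hu := uniform_kind hHedge q h hndq hI'
    intro e1 he1 e2 he2
    rcases (by simpa using he1 : e1 = s(u, d) ∨ e1 ∈ q.edges) with rfl | he1' <;>
      rcases (by simpa using he2 : e2 = s(u, d) ∨ e2 ∈ q.edges) with rfl | he2'
    · exact Iff.rfl
    · exact (hu e2 he2').symm
    · exact hu e1 he1'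
    · exact (hu e1 he1').trans (hu e2 he2').symm

lemma take_uniform
    (hHedge : ∀ x y : V, G.Adj x y → x ∈ H \ ({v1, v2} : Set V) → y ∈ H)
    (hne : v1 ≠ v2) (c2 : G.Walk v1 v1) (hc2 : c2.IsCycle) (hv2 : v2 ∈ c2.support) :
    (∀ e1 ∈ (c2.takeUntil v2 hv2).edges, ∀ e2 ∈ (c2.takeUntil v2 hv2).edges,
      ((∀ z ∈ e1, z ∈ H) ↔ (∀ z ∈ e2, z ∈ H))) ∧
    (∀ e1 ∈ (c2.dropUntil v2 hv2).edges, ∀ e2 ∈ (c2.dropUntil v2 hv2).edges,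
      ((∀ z ∈ e1, z ∈ H) ↔ (∀ z ∈ e2, z ∈ H))) := by
  obtain ⟨l, m, hPs, hQs, hl, hm, hnd⟩ := split_facts hne c2 hc2 hv2
  constructor
  · exact path_uniform hHedge _ l hPs (List.nodup_append.mp hnd).1 hl
  · refine path_uniform hHedge _ m hQs (List.nodup_append.mp hnd).2.1 ?_
    intro x hx hmem
    rcases hmem with rfl | rfl
    · exact hm x hx (by simp)
    · exact hm x hx (by simp)
end Aux5

section Aux6
variable {V : Type*} [DecidableEq V] {G : SimpleGraph V} {v1 v2 : V} {H : Set V}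

lemma typeAFlip_adj (G : SimpleGraph V) (a b : V) :
    (typeAFlip G v1 v2 H).Adj a b ↔
      (Equiv.swap v1 v2 a ∈ H ∧ Equiv.swap v1 v2 b ∈ H ∧
        G.Adj (Equiv.swap v1 v2 a) (Equiv.swap v1 v2 b)) ∨
      (¬(a ∈ H ∧ b ∈ H) ∧ G.Adj a b) := Iff.rfl

lemma typeAFlip_comm (G : SimpleGraph V) :
    typeAFlip G v1 v2 H = typeAFlip G v2 v1 H := by
  ext a b
  rw [typeAFlip_adj, typeAFlip_adj, Equiv.swap_comm v1 v2]

lemma phiA_comm : phiA v1 v2 H = phiA v2 v1 H := by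
  funext e
  unfold phiA
  rw [Equiv.swap_comm v1 v2]

lemma hHedge_swap
    (hHedge : ∀ x y : V, G.Adj x y → x ∈ H \ ({v1, v2} : Set V) → y ∈ H) :
    ∀ x y : V, G.Adj x y → x ∈ H \ ({v2, v1} : Set V) → y ∈ H := by
  intro x y hxy hx
  exact hHedge x y hxy (by rwa [Set.pair_comm v2 v1] at hx)

lemma typeAFlip_flip_flip (h1 : v1 ∈ H) (h2 : v2 ∈ H) :
    typeAFlip (typeAFlip G v1 v2 H) v1 v2 H = G := by
  ext a b
  rw [flip_adj h1 h2, flip_adj h1 h2, flip_adj h1 h2]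
  by_cases hab : a ∈ H ∧ b ∈ H
  · simp [hab, hab.1, hab.2, swap_mem_H h1 h2, Equiv.swap_apply_self]
  · simp only [swap_mem_H h1 h2, Equiv.swap_apply_self]
    tauto

lemma isCycle_transfer {G G' : SimpleGraph V} {u : V} (c : G.Walk u u) (hc : c.IsCycle)
    (h : ∀ e ∈ c.edges, e ∈ G'.edgeSet) : (c.transfer G' h).IsCycle := by
  rw [Walk.isCycle_def] at hc ⊢
  refine ⟨?_, ?_, ?_⟩
  · rw [Walk.isTrail_def, c.edges_transfer h]
    exact (Walk.isTrail_def _).mp hc.1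
  · intro hnil
    have : (c.transfer G' h).length = 0 := by rw [hnil]; rfl
    rw [Walk.length_transfer] at this
    exact hc.2.1 (Walk.nil_iff_eq_nil.mp (Walk.length_eq_zero_iff.mp this))
  · rw [c.support_transfer h]
    exact hc.2.2

lemma cycle_transfer {G G' : SimpleGraph V} {u : V} (c : G.Walk u u) (hc : c.IsCycle)
    (h : ∀ e ∈ c.edges, e ∈ G'.edgeSet) :
    ∃ c' : G'.Walk u u, c'.IsCycle ∧ c'.edges = c.edges :=
  ⟨c.transfer G' h, isCycle_transfer c hc h, c.edges_transfer h⟩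
end Aux6

section Main
variable {V : Type*} [DecidableEq V] {G : SimpleGraph V} {v1 v2 : V} {H : Set V}

lemma mainMixed1 (hne : v1 ≠ v2) (h1 : v1 ∈ H) (h2 : v2 ∈ H)
    (hHedge : ∀ x y : V, G.Adj x y → x ∈ H \ ({v1, v2} : Set V) → y ∈ H)
    (c1 : G.Walk v1 v1) (hc1 : c1.IsCycle) (hv2 : v2 ∈ c1.support)
    {ein eout : Sym2 V} (hein : ein ∈ c1.edges) (heinI : ∀ z ∈ ein, z ∈ H)
    (heout : eout ∈ c1.edges) (heoutI : ¬ ∀ z ∈ eout, z ∈ H) :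
    ∃ u' : V, ∃ c' : (typeAFlip G v1 v2 H).Walk u' u', c'.IsCycle ∧
      c'.edges.Perm (c1.edges.map (phiA v1 v2 H)) := by
  classical
  obtain ⟨hPu, hQu⟩ := take_uniform hHedge hne c1 hc1 hv2
  set P := c1.takeUntil v2 hv2 with hPdef
  set Q := c1.dropUntil v2 hv2 with hQdef
  have hsplit : c1.edges = P.edges ++ Q.edges := by
    conv_lhs => rw [← c1.take_spec hv2]
    rw [Walk.edges_append]
  by_cases hinP : ein ∈ P.edges
  · have hPin : ∀ e ∈ P.edges, ∀ z ∈ e, z ∈ H := fun e he =>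
      (hPu e he ein hinP).mpr heinI
    have houtQ : eout ∈ Q.edges := by
      rcases List.mem_append.mp (hsplit ▸ heout) with h' | h'
      · exact absurd (hPin eout h') heoutI
      · exact h'
    have hQout : ∀ e ∈ Q.edges, ¬ ∀ z ∈ e, z ∈ H := fun e he hIns =>
      heoutI ((hQu eout houtQ e he).mpr hIns)
    exact mixedCase hne h1 h2 c1 hc1 hv2 hPin hQout
  · have hinQ : ein ∈ Q.edges := by
      rcases List.mem_append.mp (hsplit ▸ hein) with h' | h'
      · exact absurd h' hinP
      · exact h'
    have hQin : ∀ e ∈ Q.edges, ∀ z ∈ e, z ∈ H := fun e he =>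
      (hQu e he ein hinQ).mpr heinI
    have houtP : eout ∈ P.edges := by
      rcases List.mem_append.mp (hsplit ▸ heout) with h' | h'
      · exact h'
      · exact absurd (hQin eout h') heoutI
    -- rotate the cycle to start at v2
    set c3 := c1.rotate v2 hv2 with hc3def
    have hc3 : c3.IsCycle := hc1.rotate hv2
    have hc3QP : c3 = Q.append P := rfl
    have hc3e : c3.edges = Q.edges ++ P.edges := by rw [hc3QP, Walk.edges_append]
    have hv1 : v1 ∈ c3.support := by
      rw [hc3QP]
      exact Walk.subset_support_append_right _ _ P.start_mem_support
    obtain ⟨hP3u, hQ3u⟩ := take_uniform (v1 := v2) (v2 := v1)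
      (hHedge_swap hHedge) hne.symm c3 hc3 hv1
    set P3 := c3.takeUntil v1 hv1 with hP3def
    set Q3 := c3.dropUntil v1 hv1 with hQ3def
    have hsplit3 : c3.edges = P3.edges ++ Q3.edges := by
      conv_lhs => rw [← c3.take_spec hv1]
      rw [Walk.edges_append]
    have hP3ne : P3.edges ≠ [] := by
      intro h0
      have hlen : P3.length = 0 := by rw [← Walk.length_edges, h0]; rfl
      exact hne.symm (Walk.eq_of_length_eq_zero hlen)
    have hQne : Q.edges ≠ [] := by
      intro h0
      have hlen : Q.length = 0 := by rw [← Walk.length_edges, h0]; rfl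
      exact hne.symm (Walk.eq_of_length_eq_zero hlen)
    obtain ⟨q0, qt, hq⟩ := List.exists_cons_of_ne_nil hQne
    obtain ⟨p0, pt, hp⟩ := List.exists_cons_of_ne_nil hP3ne
    have hq0p0 : q0 = p0 := by
      have e1 : c3.edges = q0 :: (qt ++ P.edges) := by rw [hc3e, hq]; rfl
      have e2 : c3.edges = p0 :: (pt ++ Q3.edges) := by rw [hsplit3, hp]; rfl
      have := e1.symm.trans e2
      exact (List.cons_eq_cons.mp this).1
    have hp0P3 : p0 ∈ P3.edges := by rw [hp]; simp
    have hq0in : ∀ z ∈ p0, z ∈ H := by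
      rw [← hq0p0]
      exact hQin q0 (by rw [hq]; simp)
    have hP3in : ∀ e ∈ P3.edges, ∀ z ∈ e, z ∈ H := fun e he =>
      (hP3u e he p0 hp0P3).mpr hq0in
    have heout3 : eout ∈ c3.edges := by
      rw [hc3e]
      exact List.mem_append_right _ houtP
    have houtQ3 : eout ∈ Q3.edges := by
      rcases List.mem_append.mp (hsplit3 ▸ heout3) with h' | h'
      · exact absurd (hP3in eout h') heoutI
      · exact h'
    have hQ3out : ∀ e ∈ Q3.edges, ¬ ∀ z ∈ e, z ∈ H := fun e he hIns =>
      heoutI ((hQ3u eout houtQ3 e he).mpr hIns)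
    obtain ⟨u', c', hcyc, hperm⟩ := mixedCase (v1 := v2) (v2 := v1)
      hne.symm h2 h1 c3 hc3 hv1 hP3in hQ3out
    rw [typeAFlip_comm (v1 := v1) (v2 := v2), phiA_comm (v1 := v1) (v2 := v2)]
    refine ⟨u', c', hcyc, hperm.trans ?_⟩
    exact ((c1.rotate_edges v2 hv2).perm.map _)

lemma mainCycle (hne : v1 ≠ v2) (h1 : v1 ∈ H) (h2 : v2 ∈ H)
    (hHedge : ∀ x y : V, G.Adj x y → x ∈ H \ ({v1, v2} : Set V) → y ∈ H)
    {u : V} (c : G.Walk u u) (hc : c.IsCycle) :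
    ∃ u' : V, ∃ c' : (typeAFlip G v1 v2 H).Walk u' u', c'.IsCycle ∧
      c'.edges.Perm (c.edges.map (phiA v1 v2 H)) := by
  classical
  by_cases hall : ∀ e ∈ c.edges, ∀ z ∈ e, z ∈ H
  · -- every edge inside `H`: map the whole cycle through the swap
    have hCGH : ∀ e ∈ c.edges, e ∈ (insideG G H).edgeSet := fun e he =>
      mem_insideG_edgeSet (c.edges_subset_edgeSet he) (hall e he)
    refine ⟨_, ((c.transfer (insideG G H) hCGH).map (swapHom G v1 v2 H)), ?_, ?_⟩
    · exact (isCycle_transfer c hc hCGH).map (Equiv.swap v1 v2).injective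
    · rw [Walk.edges_map, Walk.edges_transfer, swapHom_coe]
      have h' : c.edges.map (phiA v1 v2 H) = c.edges.map (Sym2.map (Equiv.swap v1 v2)) :=
        List.map_congr_left (fun e he => phiA_inside (hall e he))
      rw [h']
  by_cases hnone : ∀ e ∈ c.edges, ¬ ∀ z ∈ e, z ∈ H
  · have hCF : ∀ e ∈ c.edges, e ∈ (typeAFlip G v1 v2 H).edgeSet := fun e he =>
      mem_flip_outside (c.edges_subset_edgeSet he) (hnone e he)
    obtain ⟨c', hcyc, hed⟩ := cycle_transfer c hc hCF
    refine ⟨u, c', hcyc, ?_⟩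
    rw [hed]
    have h' : c.edges.map (phiA v1 v2 H) = c.edges.map id :=
      List.map_congr_left (fun e he => phiA_outside (hnone e he))
    rw [h', List.map_id]
  · have hout : ∃ e ∈ c.edges, ¬ ∀ z ∈ e, z ∈ H := by
      by_contra hcon
      push_neg at hcon
      exact hall hcon
    have hin : ∃ e ∈ c.edges, ∀ z ∈ e, z ∈ H := by
      by_contra hcon
      push_neg at hcon
      exact hnone (fun e he hall' => by
        obtain ⟨z, hz, hzn⟩ := hcon e he
        exact hzn (hall' z hz))
    obtain ⟨eout, heout, heoutI⟩ := hout
    obtain ⟨ein, hein, heinI⟩ := hin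
    have hw : v1 ∈ c.support ∨ v2 ∈ c.support := by
      by_contra hcon
      push_neg at hcon
      have huni := closed_uniform hHedge c hc (by
        intro x hx _ hmem
        rcases hmem with rfl | rfl
        · exact hcon.1 hx
        · exact hcon.2 hx)
      exact heoutI ((huni ein hein eout heout).mp heinI)
    rcases hw with hw1 | hw2
    · set c1 := c.rotate v1 hw1 with hc1def
      have hc1 : c1.IsCycle := hc.rotate hw1
      have hre : c1.edges.Perm c.edges := (c.rotate_edges v1 hw1).perm
      have hv2s : v2 ∈ c1.support := by
        by_contra hcon
        have huni := closed_uniform hHedge c1 hc1 (by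
          intro x hx hxne hmem
          rcases hmem with rfl | rfl
          · exact hxne rfl
          · exact hcon hx)
        exact heoutI ((huni ein (hre.mem_iff.mpr hein) eout (hre.mem_iff.mpr heout)).mp heinI)
      obtain ⟨u', c', hcyc, hperm⟩ := mainMixed1 hne h1 h2 hHedge c1 hc1 hv2s
        (hre.mem_iff.mpr hein) heinI (hre.mem_iff.mpr heout) heoutI
      exact ⟨u', c', hcyc, hperm.trans (hre.map _)⟩
    · rw [typeAFlip_comm (v1 := v1) (v2 := v2), phiA_comm (v1 := v1) (v2 := v2)]
      set c1 := c.rotate v2 hw2 with hc1def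
      have hc1 : c1.IsCycle := hc.rotate hw2
      have hre : c1.edges.Perm c.edges := (c.rotate_edges v2 hw2).perm
      have hv1s : v1 ∈ c1.support := by
        by_contra hcon
        have huni := closed_uniform hHedge c1 hc1 (by
          intro x hx hxne hmem
          rcases hmem with rfl | rfl
          · exact hcon hx
          · exact hxne rfl)
        exact heoutI ((huni ein (hre.mem_iff.mpr hein) eout (hre.mem_iff.mpr heout)).mp heinI)
      obtain ⟨u', c', hcyc, hperm⟩ := mainMixed1 (v1 := v2) (v2 := v1) hne.symm h2 h1
        (hHedge_swap hHedge) c1 hc1 hv1s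
        (hre.mem_iff.mpr hein) heinI (hre.mem_iff.mpr heout) heoutI
      exact ⟨u', c', hcyc, hperm.trans (hre.map _)⟩
end Main

section Final
variable {V : Type*} [DecidableEq V] {G : SimpleGraph V} {v1 v2 : V} {H : Set V}

lemma hHedge_flip (h1 : v1 ∈ H) (h2 : v2 ∈ H)
    (hHedge : ∀ x y : V, G.Adj x y → x ∈ H \ ({v1, v2} : Set V) → y ∈ H) :
    ∀ x y : V, (typeAFlip G v1 v2 H).Adj x y → x ∈ H \ ({v1, v2} : Set V) → y ∈ H := by
  intro x y hxy hx
  rcases (flip_adj h1 h2 x y).mp hxy with ⟨_, hy, _⟩ | ⟨hn, hadj⟩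
  · exact hy
  · exact hHedge x y hadj hx
end Final


/-- the edge map `phiA` of the Type A Whitney flip is a bijection from the
edge set of `G` onto the edge set of the flipped graph; a set `C` of edges of `G` is the
edge set of a cycle of `G` iff its image is the edge set of a cycle of the flipped graph;
in particular both graphs have cycles of exactly the same lengths. -/
theorem phiA_edge_bijection_cycles {V : Type*} [DecidableEq V] (G : SimpleGraph V)
    (v1 v2 : V) (hne : v1 ≠ v2) (hadj : G.Adj v1 v2)
    (H : Set V) (h1 : v1 ∈ H) (h2 : v2 ∈ H) (hHconn : (G.induce H).Connected)
    (hHedge : ∀ x y : V, G.Adj x y → x ∈ H \ ({v1, v2} : Set V) → y ∈ H) :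
    Set.BijOn (phiA v1 v2 H) G.edgeSet (typeAFlip G v1 v2 H).edgeSet ∧
      (∀ C : Set (Sym2 V), C ⊆ G.edgeSet →
        ((∃ u : V, ∃ c : G.Walk u u, c.IsCycle ∧ C = {f | f ∈ c.edges}) ↔
          (∃ u : V, ∃ c : (typeAFlip G v1 v2 H).Walk u u, c.IsCycle ∧
            phiA v1 v2 H '' C = {f | f ∈ c.edges}))) ∧
      (∀ k : ℕ, (∃ u : V, ∃ c : G.Walk u u, c.IsCycle ∧ c.length = k) ↔
        (∃ u : V, ∃ c : (typeAFlip G v1 v2 H).Walk u u, c.IsCycle ∧ c.length = k)) := by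
  classical
  have hHedge' := hHedge_flip h1 h2 hHedge
  have hff : typeAFlip (typeAFlip G v1 v2 H) v1 v2 H = G := typeAFlip_flip_flip h1 h2
  have hbij : Set.BijOn (phiA v1 v2 H) G.edgeSet (typeAFlip G v1 v2 H).edgeSet := by
    refine ⟨fun e he => phiA_mem_flip_edgeSet h1 h2 he, ?_, ?_⟩
    · exact fun a _ b _ hab => phiA_injective h1 h2 hab
    · intro e he
      exact ⟨phiA v1 v2 H e, phiA_mem_G_edgeSet h1 h2 he, phiA_invol h1 h2 e⟩
  refine ⟨hbij, ?_, ?_⟩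
  · intro C _hC
    constructor
    · rintro ⟨u, c, hc, rfl⟩
      obtain ⟨u', c', hcyc, hperm⟩ := mainCycle hne h1 h2 hHedge c hc
      refine ⟨u', c', hcyc, ?_⟩
      ext f
      simp only [Set.mem_image, Set.mem_setOf_eq]
      constructor
      · rintro ⟨g, hg, rfl⟩
        exact hperm.mem_iff.mpr (List.mem_map_of_mem hg)
      · intro hf
        obtain ⟨g, hg, rfl⟩ := List.mem_map.mp (hperm.mem_iff.mp hf)
        exact ⟨g, hg, rfl⟩
    · rintro ⟨u, c', hc', hC⟩
      obtain ⟨u'', c'', hcyc'', hperm''⟩ :=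
        mainCycle (G := typeAFlip G v1 v2 H) hne h1 h2 hHedge' c' hc'
      have hedges : ∀ e ∈ c''.edges, e ∈ G.edgeSet := fun e he =>
        hff ▸ (Walk.edges_subset_edgeSet _ he)
      obtain ⟨c3, hc3cyc, hc3e⟩ := cycle_transfer c'' hcyc'' hedges
      refine ⟨u'', c3, hc3cyc, ?_⟩
      have hCC : C = phiA v1 v2 H '' (phiA v1 v2 H '' C) := by
        rw [Set.image_image]
        ext x
        constructor
        · intro hx; exact ⟨x, hx, phiA_invol h1 h2 x⟩
        · rintro ⟨y, hy, heq⟩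
          simp only [phiA_invol h1 h2 y] at heq
          exact heq ▸ hy
      rw [hCC, hC]
      ext f
      simp only [Set.mem_image, Set.mem_setOf_eq]
      constructor
      · rintro ⟨g, hg, rfl⟩
        rw [hc3e]
        exact hperm''.mem_iff.mpr (List.mem_map_of_mem hg)
      · intro hf
        rw [hc3e] at hf
        obtain ⟨g, hg, rfl⟩ := List.mem_map.mp (hperm''.mem_iff.mp hf)
        exact ⟨g, hg, rfl⟩
  · intro k
    constructor
    · rintro ⟨u, c, hc, hlen⟩
      obtain ⟨u', c', hcyc, hperm⟩ := mainCycle hne h1 h2 hHedge c hc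
      refine ⟨u', c', hcyc, ?_⟩
      calc c'.length = c'.edges.length := (Walk.length_edges _).symm
        _ = (c.edges.map (phiA v1 v2 H)).length := hperm.length_eq
        _ = c.edges.length := List.length_map _
        _ = c.length := Walk.length_edges _
        _ = k := hlen
    · rintro ⟨u, c', hc', hlen⟩
      obtain ⟨u'', c'', hcyc'', hperm''⟩ :=
        mainCycle (G := typeAFlip G v1 v2 H) hne h1 h2 hHedge' c' hc'
      obtain ⟨c3, hc3cyc, hc3e⟩ := cycle_transfer c'' hcyc''
        (fun e he => hff ▸ (Walk.edges_subset_edgeSet _ he))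
      refine ⟨u'', c3, hc3cyc, ?_⟩
      calc c3.length = c3.edges.length := (Walk.length_edges _).symm
        _ = c''.edges.length := by rw [hc3e]
        _ = c'.edges.length := by rw [hperm''.length_eq, List.length_map]
        _ = c'.length := Walk.length_edges _
        _ = k := hlen
end

section
/- Let G be a connected simple graph with at least one edge, let G' be the Type A Whitney flip of G along (H, v1, v2), and let φ be the map sending each edge {x, y} of G with both endpoints in H to {σ(x), σ(y)} and fixing every other edge of G. Then φ maps the edge set of each block of G bijectively onto the edge set of a block of G', and this induces a bijection between the blocks of G and the blocks of G' under which corresponding blocks have the same number of edges and the same maximum cycle length (with maximum cycle length 0 for blocks containing no cycle). -/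
open SimpleGraph

attribute [local instance] Classical.propDecidable

/-- A cut vertex of (the graph represented by) a subgraph `B`: a vertex of `B` whose
deletion (together with all incident edges) disconnects `B`. -/
def SimpleGraph.Subgraph.IsCutVertex {V : Type*} {G : SimpleGraph V} (B : G.Subgraph)
    (v : V) : Prop :=
  v ∈ B.verts ∧ ¬ (B.deleteVerts {v}).coe.Preconnected

/-- A block of `G`: an induced connected subgraph without cut vertices that is maximal
with this property. -/
def SimpleGraph.Subgraph.IsBlock {V : Type*} {G : SimpleGraph V} (B : G.Subgraph) : Prop :=
  B.IsInduced ∧ B.coe.Connected ∧ (∀ v, ¬ B.IsCutVertex v) ∧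
    ∀ B' : G.Subgraph, B'.IsInduced → B'.coe.Connected → (∀ v, ¬ B'.IsCutVertex v) →
      B ≤ B' → B = B'

/-- The maximum length of a cycle all of whose edges lie in the subgraph `B`
(`0` if there is no such cycle). -/
noncomputable def maxCycleLength {V : Type*} {G : SimpleGraph V} (B : G.Subgraph) : ℕ :=
  sSup {n : ℕ | ∃ u : V, ∃ c : G.Walk u u, c.IsCycle ∧
    (∀ f ∈ c.edges, f ∈ B.edgeSet) ∧ c.length = n}

namespace WFAux
variable {V : Type*}

/-- Edge-chain reachability. -/
def ERel (E : Set (Sym2 V)) : V → V → Prop :=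
  Relation.ReflTransGen (fun a b => s(a, b) ∈ E)

namespace ERel
variable {E F : Set (Sym2 V)} {a b c : V}

protected lemma refl : ERel E a a := Relation.ReflTransGen.refl

protected lemma single (h : s(a, b) ∈ E) : ERel E a b := Relation.ReflTransGen.single h

protected lemma trans (h : ERel E a b) (h' : ERel E b c) : ERel E a c :=
  Relation.ReflTransGen.trans h h'

protected lemma symm (h : ERel E a b) : ERel E b a := by
  induction h with
  | refl => exact .refl
  | tail _ hstep ih =>
    exact Relation.ReflTransGen.head (by rwa [Sym2.eq_swap] at hstep) ih

protected lemma mono (hEF : E ⊆ F) (h : ERel E a b) : ERel F a b :=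
  Relation.ReflTransGen.mono (fun _ _ hx => hEF hx) _ _ h

protected lemma lift {f : V → V} (hf : ∀ x y, s(x, y) ∈ E → s(f x, f y) ∈ F)
    (h : ERel E a b) : ERel F (f a) (f b) :=
  Relation.ReflTransGen.lift (p := fun a b => s(a, b) ∈ F) f (fun _ _ hx => hf _ _ hx) _ _ h

protected lemma ind {R : V → V → Prop} (hR : ∀ x y, s(x, y) ∈ E → R x y)
    (hrefl : ∀ x, R x x) (htrans : ∀ x y z, R x y → R y z → R x z)
    (h : ERel E a b) : R a b := by
  induction h with
  | refl => exact hrefl a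
  | tail _ hstep ih => exact htrans _ _ _ ih (hR _ _ hstep)

protected lemma eq_of_empty (h : ERel (∅ : Set (Sym2 V)) a b) : a = b := by
  induction h with
  | refl => rfl
  | tail _ hstep ih => exact absurd hstep (Set.notMem_empty _)

end ERel

lemma cross {E : Set (Sym2 V)} {P : V → Prop} {x y : V} (h : ERel E x y) (hx : P x) :
    ¬ P y → ∃ a b, s(a, b) ∈ E ∧ P a ∧ ¬ P b := by
  induction h with
  | refl => exact fun hy => absurd hx hy
  | @tail b c _ hstep ih =>
    intro hy
    by_cases hb : P b
    · exact ⟨b, c, hstep, hb, hy⟩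
    · exact ih hb

lemma prefixCross {E : Set (Sym2 V)} {P : V → Prop} {x y : V} (h : ERel E x y)
    (hy : ¬ P y) : P x →
    ∃ a b, s(a, b) ∈ E ∧ P a ∧ ¬ P b ∧ ERel {e | e ∈ E ∧ ∀ z ∈ e, P z} x a := by
  induction h using Relation.ReflTransGen.head_induction_on with
  | refl => exact fun hx => absurd hx hy
  | @head x c hstep _ ih =>
    intro hx
    by_cases hc : P c
    · obtain ⟨a, b, he, ha, hb, hpre⟩ := ih hc
      refine ⟨a, b, he, ha, hb, Relation.ReflTransGen.head ?_ hpre⟩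
      refine ⟨hstep, ?_⟩
      intro z hz
      rcases Sym2.mem_iff.1 hz with rfl | rfl
      · exact hx
      · exact hc
    · exact ⟨x, c, hstep, hx, hc, .refl⟩

lemma walk_erel {K : SimpleGraph V} {E : Set (Sym2 V)} :
    ∀ {s t : V} (p : K.Walk s t), (∀ e ∈ p.edges, e ∈ E) → ERel E s t := by
  intro s t p
  induction p with
  | nil => exact fun _ => .refl
  | cons h p ih =>
    intro hE
    exact Relation.ReflTransGen.head (hE _ (by simp)) (ih fun e he => hE _ (by simp [he]))

lemma erel_support {K : SimpleGraph V} :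
    ∀ {s t : V} (p : K.Walk s t) {x : V}, x ∈ p.support → ERel {e | e ∈ p.edges} s x := by
  intro s t p
  induction p with
  | nil => intro x hx; rw [Walk.support_nil, List.mem_singleton] at hx; subst hx; exact .refl
  | @cons s u t h p ih =>
    intro x hx
    rw [Walk.support_cons, List.mem_cons] at hx
    rcases hx with rfl | hx
    · exact .refl
    · refine Relation.ReflTransGen.head (by simp) ((ih hx).mono ?_)
      intro e he
      simp only [Set.mem_setOf_eq, Walk.edges_cons] at he ⊢
      exact List.mem_cons_of_mem _ he

/-- Bridge from subtype-level preconnectivity to edge chains. -/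
lemma preconnected_iff {K : SimpleGraph V} (B : K.Subgraph) :
    B.coe.Preconnected ↔ ∀ x ∈ B.verts, ∀ y ∈ B.verts, ERel B.edgeSet x y := by
  constructor
  · intro h x hx y hy
    obtain ⟨w⟩ := h ⟨x, hx⟩ ⟨y, hy⟩
    have aux : ∀ (p q : B.verts) (w : B.coe.Walk p q), ERel B.edgeSet p.1 q.1 := by
      intro p q w
      induction w with
      | nil => exact .refl
      | cons hadj _ ih =>
        exact Relation.ReflTransGen.head (Subgraph.mem_edgeSet.2 hadj) ih
    exact aux _ _ w
  · intro h x y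
    obtain ⟨x, hx⟩ := x
    obtain ⟨y, hy⟩ := y
    have aux : ∀ y, ERel B.edgeSet x y → ∀ hy : y ∈ B.verts,
        B.coe.Reachable ⟨x, hx⟩ ⟨y, hy⟩ := by
      intro y h'
      induction h' with
      | refl => exact fun _ => Reachable.refl _
      | @tail b c hxb hstep ih =>
        intro hc
        have hb : b ∈ B.verts := B.edge_vert (Subgraph.mem_edgeSet.1 hstep)
        refine (ih hb).trans (Adj.reachable ?_)
        exact Subgraph.mem_edgeSet.1 hstep
    exact aux y (h x hx y hy) hy

lemma deleteVerts_edgeSet_subset {K : SimpleGraph V} (B : K.Subgraph) (v : V) :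
    (B.deleteVerts {v}).edgeSet ⊆ {e | e ∈ B.edgeSet ∧ v ∉ e} := by
  intro e
  induction e using Sym2.ind with
  | _ a b =>
    intro h
    rw [Subgraph.mem_edgeSet, Subgraph.deleteVerts_adj] at h
    refine ⟨Subgraph.mem_edgeSet.2 h.2.2.2.2, ?_⟩
    rw [Sym2.mem_iff]
    rintro (rfl | rfl)
    · exact h.2.1 (Set.mem_singleton _)
    · exact h.2.2.2.1 (Set.mem_singleton _)

lemma subset_deleteVerts_edgeSet {K : SimpleGraph V} (B : K.Subgraph) (v : V) :
    {e | e ∈ B.edgeSet ∧ v ∉ e} ⊆ (B.deleteVerts {v}).edgeSet := by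
  intro e
  induction e using Sym2.ind with
  | _ a b =>
    rintro ⟨he, hv⟩
    rw [Subgraph.mem_edgeSet] at he
    rw [Subgraph.mem_edgeSet, Subgraph.deleteVerts_adj]
    refine ⟨B.edge_vert he, ?_, B.edge_vert he.symm, ?_, he⟩ <;>
      · rw [Set.mem_singleton_iff]
        rintro rfl
        exact hv (by simp)

/-- From connectivity and the absence of cut vertices: chains avoiding any vertex. -/
lemma avoid {K : SimpleGraph V} {B : K.Subgraph} (hpre : B.coe.Preconnected)
    (hcut : ∀ w, ¬ B.IsCutVertex w) {v x y : V} (hx : x ∈ B.verts) (hy : y ∈ B.verts)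
    (hxv : x ≠ v) (hyv : y ≠ v) : ERel {e | e ∈ B.edgeSet ∧ v ∉ e} x y := by
  by_cases hv : v ∈ B.verts
  · have hp : (B.deleteVerts {v}).coe.Preconnected := by
      have := hcut v
      rw [Subgraph.IsCutVertex] at this
      tauto
    have := (preconnected_iff _).1 hp x ?_ y ?_
    · exact this.mono (deleteVerts_edgeSet_subset B v)
    · rw [Subgraph.deleteVerts_verts]; exact ⟨hx, by simpa using hxv⟩
    · rw [Subgraph.deleteVerts_verts]; exact ⟨hy, by simpa using hyv⟩
  · refine ((preconnected_iff _).1 hpre x hx y hy).mono ?_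
    intro e he
    refine ⟨he, fun hv' => hv ?_⟩
    have : e ∈ K.edgeSet := B.edgeSet_subset he
    induction e using Sym2.ind with
    | _ a b =>
      rcases Sym2.mem_iff.1 hv' with rfl | rfl
      · exact B.edge_vert (Subgraph.mem_edgeSet.1 he)
      · exact B.edge_vert (Subgraph.mem_edgeSet.1 he).symm

lemma notCut_of {K : SimpleGraph V} {B : K.Subgraph} {v : V}
    (h : ∀ x ∈ B.verts, x ≠ v → ∀ y ∈ B.verts, y ≠ v →
      ERel {e | e ∈ B.edgeSet ∧ v ∉ e} x y) :
    ¬ B.IsCutVertex v := by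
  rintro ⟨hv, hnp⟩
  apply hnp
  rw [preconnected_iff]
  intro x hx y hy
  rw [Subgraph.deleteVerts_verts] at hx hy
  exact (h x hx.1 (by simpa using hx.2) y hy.1 (by simpa using hy.2)).mono
    (subset_deleteVerts_edgeSet B v)

lemma mem_support_of_mem_edges {K : SimpleGraph V} {s t z : V} (p : K.Walk s t)
    {e : Sym2 V} (he : e ∈ p.edges) (hz : z ∈ e) : z ∈ p.support := by
  induction e using Sym2.ind with
  | _ a b =>
    rcases Sym2.mem_iff.1 hz with rfl | rfl
    · exact p.fst_mem_support_of_mem_edges he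
    · exact p.snd_mem_support_of_mem_edges he

/-- Any two vertices (different from `z`) on a cycle based at one of them are joined by an
edge chain of the cycle avoiding `z`. -/
lemma cycle_avoid_base [DecidableEq V] {K : SimpleGraph V} {a : V} (d : K.Walk a a)
    (hd : d.IsCycle) {b z : V} (hb : b ∈ d.support) (haz : a ≠ z) (hbz : b ≠ z) :
    ERel {e | e ∈ d.edges ∧ z ∉ e} a b := by
  cases d with
  | nil => exact absurd hd (by simp)
  | @cons _ x _ hadj q =>
    obtain ⟨hq, hax⟩ := (Walk.cons_isCycle_iff q hadj).1 hd
    rw [Walk.support_cons, List.mem_cons] at hb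
    rcases hb with rfl | hbq
    · exact .refl
    have hspec := q.take_spec hbq
    have hsupp : q.support = (q.takeUntil b hbq).support ++ (q.dropUntil b hbq).support.tail := by
      conv_lhs => rw [← hspec]
      exact Walk.support_append _ _
    by_cases hz2 : z ∈ (q.dropUntil b hbq).support
    · -- z is in the second part; use edge (a,x) and the first part
      have hz2' : z ∈ (q.dropUntil b hbq).support.tail := by
        have := (q.dropUntil b hbq).support_eq_cons
        rw [this, List.mem_cons] at hz2
        rcases hz2 with rfl | h
        · exact absurd rfl hbz.symm
        · exact h
      have hz1 : z ∉ (q.takeUntil b hbq).support := by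
        intro hz1
        have := hq.support_nodup
        rw [hsupp] at this
        exact (List.disjoint_of_nodup_append this) hz1 hz2'
      refine Relation.ReflTransGen.head (b := x) ?_ ?_
      · refine ⟨by simp, ?_⟩
        rw [Sym2.mem_iff]
        rintro (rfl | rfl)
        · exact haz rfl
        · exact hz1 (Walk.start_mem_support _)
      · refine walk_erel (q.takeUntil b hbq) ?_
        intro e he
        refine ⟨?_, fun hz => hz1 (mem_support_of_mem_edges _ he hz)⟩
        rw [Walk.edges_cons]
        exact List.mem_cons_of_mem _ (q.edges_takeUntil_subset hbq he)
    · -- z not in second part: go backwards along dropUntil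
      have := walk_erel (E := {e | e ∈ (Walk.cons hadj q).edges ∧ z ∉ e})
        (q.dropUntil b hbq) ?_
      · exact this.symm
      · intro e he
        refine ⟨?_, fun hz => hz2 (mem_support_of_mem_edges _ he hz)⟩
        rw [Walk.edges_cons]
        exact List.mem_cons_of_mem _ (q.edges_dropUntil_subset hbq he)

lemma closed_mem_support_tail {K : SimpleGraph V} {u : V} (c : K.Walk u u) (hc : ¬ c.Nil)
    {x : V} (hx : x ∈ c.support) : x ∈ c.support.tail := by
  cases c with
  | nil => simp at hc
  | cons h p =>
    rw [Walk.support_cons, List.tail_cons]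
    rw [Walk.support_cons, List.mem_cons] at hx
    rcases hx with rfl | hx
    · exact p.end_mem_support
    · exact hx

lemma cycle_avoid [DecidableEq V] {K : SimpleGraph V} {u : V} {c : K.Walk u u}
    (hc : c.IsCycle) {a b z : V} (ha : a ∈ c.support) (hb : b ∈ c.support)
    (haz : a ≠ z) (hbz : b ≠ z) :
    ERel {e | e ∈ c.edges ∧ z ∉ e} a b := by
  have hd := hc.rotate ha
  have hbd : b ∈ (c.rotate _ ha).support := by
    have h1 : b ∈ c.support.tail := closed_mem_support_tail c hc.not_nil hb
    have h2 := (c.support_rotate _ ha).mem_iff.2 h1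
    exact List.mem_of_mem_tail h2
  refine (cycle_avoid_base (c.rotate _ ha) hd hbd haz hbz).mono ?_
  intro e he
  exact ⟨(c.rotate_edges _ ha).mem_iff.1 he.1, he.2⟩

section Swap
variable [DecidableEq V] {v1 v2 : V} {H : Set V}

lemma swap_mem_iff (h1 : v1 ∈ H) (h2 : v2 ∈ H) (x : V) :
    Equiv.swap v1 v2 x ∈ H ↔ x ∈ H := by
  rcases eq_or_ne x v1 with rfl | hx1
  · rw [Equiv.swap_apply_left]; exact ⟨fun _ => h1, fun _ => h2⟩
  rcases eq_or_ne x v2 with rfl | hx2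
  · rw [Equiv.swap_apply_right]; exact ⟨fun _ => h2, fun _ => h1⟩
  · rw [Equiv.swap_apply_of_ne_of_ne hx1 hx2]

lemma phiA_pair (v1 v2 : V) (H : Set V) (a b : V) :
    phiA v1 v2 H s(a, b) =
      if a ∈ H ∧ b ∈ H then s(Equiv.swap v1 v2 a, Equiv.swap v1 v2 b) else s(a, b) := by
  unfold phiA
  by_cases h : a ∈ H ∧ b ∈ H
  · rw [if_pos, if_pos h, Sym2.map_pair_eq]
    intro x hx
    rcases Sym2.mem_iff.1 hx with rfl | rfl
    · exact h.1
    · exact h.2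
  · rw [if_neg, if_neg h]
    intro hall
    exact h ⟨hall a (by simp), hall b (by simp)⟩

lemma phiA_pair_pos {a b : V} (ha : a ∈ H) (hb : b ∈ H) :
    phiA v1 v2 H s(a, b) = s(Equiv.swap v1 v2 a, Equiv.swap v1 v2 b) := by
  rw [phiA_pair, if_pos ⟨ha, hb⟩]

lemma phiA_pair_neg {a b : V} (h : ¬ (a ∈ H ∧ b ∈ H)) :
    phiA v1 v2 H s(a, b) = s(a, b) := by
  rw [phiA_pair, if_neg h]

lemma phiA_phiA (h1 : v1 ∈ H) (h2 : v2 ∈ H) (e : Sym2 V) :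
    phiA v1 v2 H (phiA v1 v2 H e) = e := by
  induction e using Sym2.ind with
  | _ a b =>
    by_cases h : a ∈ H ∧ b ∈ H
    · rw [phiA_pair_pos h.1 h.2,
        phiA_pair_pos ((swap_mem_iff h1 h2 a).2 h.1) ((swap_mem_iff h1 h2 b).2 h.2)]
      simp
    · rw [phiA_pair_neg h, phiA_pair_neg h]

lemma phiA_injective (h1 : v1 ∈ H) (h2 : v2 ∈ H) :
    Function.Injective (phiA v1 v2 H) :=
  Function.Involutive.injective (phiA_phiA h1 h2)

lemma phiA_comm (v1 v2 : V) (H : Set V) : phiA v2 v1 H = phiA v1 v2 H := by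
  funext e
  unfold phiA
  rw [Equiv.swap_comm]

end Swap

/-- All data of a type A Whitney flip, in symmetric form. -/
structure Setup (V : Type*) [DecidableEq V] where
  G : SimpleGraph V
  G2 : SimpleGraph V
  v1 : V
  v2 : V
  H : Set V
  hne : v1 ≠ v2
  h1 : v1 ∈ H
  h2 : v2 ∈ H
  hadj : G.Adj v1 v2
  hconn : G.Connected
  hHedge : ∀ x y, G.Adj x y → x ∈ H → x ≠ v1 → x ≠ v2 → y ∈ H
  hflip : ∀ a b, G2.Adj a b ↔
    ((Equiv.swap v1 v2 a ∈ H ∧ Equiv.swap v1 v2 b ∈ H ∧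
        G.Adj (Equiv.swap v1 v2 a) (Equiv.swap v1 v2 b)) ∨
      (¬(a ∈ H ∧ b ∈ H) ∧ G.Adj a b))

namespace Setup
variable {V : Type*} [DecidableEq V] (S : Setup V)

lemma memH (x : V) : Equiv.swap S.v1 S.v2 x ∈ S.H ↔ x ∈ S.H :=
  swap_mem_iff S.h1 S.h2 x

lemma adj2_inner {a b : V} (ha : a ∈ S.H) (hb : b ∈ S.H) (h : S.G.Adj a b) :
    S.G2.Adj (Equiv.swap S.v1 S.v2 a) (Equiv.swap S.v1 S.v2 b) := by
  rw [S.hflip]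
  exact Or.inl (by simpa using ⟨ha, hb, h⟩)

lemma adj2_outer {a b : V} (h' : ¬(a ∈ S.H ∧ b ∈ S.H)) (h : S.G.Adj a b) :
    S.G2.Adj a b := by
  rw [S.hflip]
  exact Or.inr ⟨h', h⟩

lemma hadj2 : S.G2.Adj S.v1 S.v2 := by
  have := S.adj2_inner S.h2 S.h1 S.hadj.symm
  simpa using this

lemma hflip2 : ∀ a b, S.G.Adj a b ↔
    ((Equiv.swap S.v1 S.v2 a ∈ S.H ∧ Equiv.swap S.v1 S.v2 b ∈ S.H ∧
        S.G2.Adj (Equiv.swap S.v1 S.v2 a) (Equiv.swap S.v1 S.v2 b)) ∨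
      (¬(a ∈ S.H ∧ b ∈ S.H) ∧ S.G2.Adj a b)) := by
  intro a b
  rw [S.hflip a b, S.hflip (Equiv.swap S.v1 S.v2 a) (Equiv.swap S.v1 S.v2 b)]
  simp only [Equiv.swap_apply_self, S.memH]
  by_cases ha : a ∈ S.H <;> by_cases hb : b ∈ S.H <;> tauto

lemma hHedge2 : ∀ x y, S.G2.Adj x y → x ∈ S.H → x ≠ S.v1 → x ≠ S.v2 → y ∈ S.H := by
  intro x y hxy hx hx1 hx2
  rw [S.hflip] at hxy
  rcases hxy with ⟨_, hy, _⟩ | ⟨hn, hxy⟩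
  · exact (S.memH y).1 hy
  · exact absurd (S.hHedge x y hxy hx hx1 hx2) (fun h => hn ⟨hx, h⟩)

lemma hconn2 : S.G2.Connected := by
  have hreach : ∀ x, S.G2.Reachable x (Equiv.swap S.v1 S.v2 x) := by
    intro x
    rcases eq_or_ne x S.v1 with rfl | hx1
    · rw [Equiv.swap_apply_left]; exact (S.hadj2).reachable
    rcases eq_or_ne x S.v2 with rfl | hx2
    · rw [Equiv.swap_apply_right]; exact (S.hadj2).symm.reachable
    · rw [Equiv.swap_apply_of_ne_of_ne hx1 hx2]
  have hstep : ∀ a b, S.G.Adj a b → S.G2.Reachable a b := by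
    intro a b h
    by_cases hab : a ∈ S.H ∧ b ∈ S.H
    · exact ((hreach a).trans (S.adj2_inner hab.1 hab.2 h).reachable).trans (hreach b).symm
    · exact (S.adj2_outer hab h).reachable
  have hpre := S.hconn.preconnected
  have hne : Nonempty V := S.hconn.nonempty
  constructor
  intro x y
  obtain ⟨w⟩ := hpre x y
  induction w with
  | nil => rfl
  | cons h _ ih => exact (hstep _ _ h).trans ih

/-- The same setup with the roles of the two graphs exchanged. -/
def symm : Setup V where
  G := S.G2
  G2 := S.G
  v1 := S.v1
  v2 := S.v2
  H := S.H
  hne := S.hne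
  h1 := S.h1
  h2 := S.h2
  hadj := S.hadj2
  hconn := S.hconn2
  hHedge := S.hHedge2
  hflip := S.hflip2

/-- The same setup with the roles of `v1` and `v2` exchanged. -/
def swapV : Setup V where
  G := S.G
  G2 := S.G2
  v1 := S.v2
  v2 := S.v1
  H := S.H
  hne := S.hne.symm
  h1 := S.h2
  h2 := S.h1
  hadj := S.hadj.symm
  hconn := S.hconn
  hHedge := fun x y h hx hx2 hx1 => S.hHedge x y h hx hx1 hx2
  hflip := by
    intro a b
    rw [Equiv.swap_comm]
    exact S.hflip a b

end Setup

/-- The induced/connected/no-cut-vertex predicate (block minus maximality). -/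
def Good {K : SimpleGraph V} (B : K.Subgraph) : Prop :=
  B.IsInduced ∧ B.coe.Connected ∧ ∀ v, ¬ B.IsCutVertex v

/-- The flipped subgraph. -/
def flipSub [DecidableEq V] {G : SimpleGraph V} (G2 : SimpleGraph V) (v1 v2 : V) (H : Set V)
    (B : G.Subgraph) : G2.Subgraph where
  verts := if B.verts ⊆ H then Equiv.swap v1 v2 '' B.verts else B.verts
  Adj x y := G2.Adj x y ∧ s(x, y) ∈ phiA v1 v2 H '' B.edgeSet ∧
    x ∈ (if B.verts ⊆ H then Equiv.swap v1 v2 '' B.verts else B.verts) ∧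
    y ∈ (if B.verts ⊆ H then Equiv.swap v1 v2 '' B.verts else B.verts)
  adj_sub h := h.1
  edge_vert h := h.2.2.1
  symm := by
    constructor
    rintro x y ⟨ha, hb, hc, hd⟩
    exact ⟨ha.symm, by rwa [Sym2.eq_swap] at hb, hd, hc⟩

lemma flipSub_comm [DecidableEq V] {G : SimpleGraph V} (G2 : SimpleGraph V) (v1 v2 : V)
    (H : Set V) (B : G.Subgraph) : flipSub G2 v2 v1 H B = flipSub G2 v1 v2 H B := by
  have hswap : Equiv.swap v2 v1 = Equiv.swap v1 v2 := Equiv.swap_comm v2 v1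
  apply Subgraph.ext
  · show (if B.verts ⊆ H then Equiv.swap v2 v1 '' B.verts else B.verts) =
      (if B.verts ⊆ H then Equiv.swap v1 v2 '' B.verts else B.verts)
    rw [hswap]
  · show (fun x y => G2.Adj x y ∧ s(x, y) ∈ phiA v2 v1 H '' B.edgeSet ∧
        x ∈ (if B.verts ⊆ H then Equiv.swap v2 v1 '' B.verts else B.verts) ∧
        y ∈ (if B.verts ⊆ H then Equiv.swap v2 v1 '' B.verts else B.verts)) = _
    rw [hswap, phiA_comm]
    rfl

namespace Setup
variable {V : Type*} [DecidableEq V] (S : Setup V)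

/-- The flip applied to subgraphs of `G`. -/
def flip (B : S.G.Subgraph) : S.G2.Subgraph := flipSub S.G2 S.v1 S.v2 S.H B

/-- The flip applied to subgraphs of `G2`. -/
def unflip (C : S.G2.Subgraph) : S.G.Subgraph := flipSub S.G S.v1 S.v2 S.H C

lemma symm_flip (C : S.G2.Subgraph) : S.symm.flip C = S.unflip C := rfl

lemma symm_unflip (B : S.G.Subgraph) : S.symm.unflip B = S.flip B := rfl

lemma swapV_flip (B : S.G.Subgraph) : S.swapV.flip B = S.flip B :=
  flipSub_comm S.G2 S.v1 S.v2 S.H B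

lemma flip_verts (B : S.G.Subgraph) :
    (S.flip B).verts =
      if B.verts ⊆ S.H then Equiv.swap S.v1 S.v2 '' B.verts else B.verts := rfl

lemma flip_adj {B : S.G.Subgraph} {x y : V} :
    (S.flip B).Adj x y ↔ S.G2.Adj x y ∧ s(x, y) ∈ phiA S.v1 S.v2 S.H '' B.edgeSet ∧
      x ∈ (S.flip B).verts ∧ y ∈ (S.flip B).verts := Iff.rfl

lemma gate2 {B : S.G.Subgraph} (hpre : B.coe.Preconnected)
    (hcut : ∀ w, ¬ B.IsCutVertex w) {a b : V} (ha : a ∈ B.verts) (haH : a ∈ S.H)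
    (ha1 : a ≠ S.v1) (_ha2 : a ≠ S.v2) (hb : b ∈ B.verts) (hbH : b ∉ S.H) :
    S.v2 ∈ B.verts := by
  have hch := avoid hpre hcut (v := S.v1) ha hb ha1 (fun h => hbH (h ▸ S.h1))
  obtain ⟨x, y, ⟨hxy, hv1⟩, hxH, hyH⟩ := cross hch haH hbH
  have hadjxy : S.G.Adj x y := B.adj_sub (Subgraph.mem_edgeSet.1 hxy)
  have hx2 : x = S.v2 := by
    rcases (show x = S.v1 ∨ x = S.v2 by
      by_contra hcon
      push_neg at hcon
      exact hyH (S.hHedge x y hadjxy hxH hcon.1 hcon.2)) with rfl | h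
    · exact absurd (by simp) hv1
    · exact h
  subst hx2
  exact B.edge_vert (Subgraph.mem_edgeSet.1 hxy)

lemma gates {B : S.G.Subgraph} (hpre : B.coe.Preconnected)
    (hcut : ∀ w, ¬ B.IsCutVertex w) {a b : V} (ha : a ∈ B.verts) (haH : a ∈ S.H)
    (ha1 : a ≠ S.v1) (ha2 : a ≠ S.v2) (hb : b ∈ B.verts) (hbH : b ∉ S.H) :
    S.v1 ∈ B.verts ∧ S.v2 ∈ B.verts :=
  ⟨S.swapV.gate2 hpre hcut ha haH ha2 ha1 hb hbH,
   S.gate2 hpre hcut ha haH ha1 ha2 hb hbH⟩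

lemma mem_flip_verts {B : S.G.Subgraph} (hpre : B.coe.Preconnected)
    (hcut : ∀ w, ¬ B.IsCutVertex w) {e : Sym2 V} (he : e ∈ B.edgeSet) :
    ∀ x ∈ phiA S.v1 S.v2 S.H e, x ∈ (S.flip B).verts := by
  induction e using Sym2.ind with
  | _ a b =>
    have hAdj : B.Adj a b := Subgraph.mem_edgeSet.1 he
    have ha : a ∈ B.verts := B.edge_vert hAdj
    have hb : b ∈ B.verts := B.edge_vert hAdj.symm
    by_cases hin : B.verts ⊆ S.H
    · have hv : (S.flip B).verts = Equiv.swap S.v1 S.v2 '' B.verts := if_pos hin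
      rw [phiA_pair_pos (hin ha) (hin hb)]
      intro x hx
      rw [hv]
      rcases Sym2.mem_iff.1 hx with rfl | rfl
      · exact ⟨a, ha, rfl⟩
      · exact ⟨b, hb, rfl⟩
    · have hv : (S.flip B).verts = B.verts := if_neg hin
      obtain ⟨w, hwv, hwH⟩ := Set.not_subset.1 hin
      by_cases hab : a ∈ S.H ∧ b ∈ S.H
      · have hσmem : ∀ c d, c ∈ B.verts → d ∈ B.verts → B.Adj c d → c ∈ S.H → d ∈ S.H →
            Equiv.swap S.v1 S.v2 c ∈ B.verts := by
          intro c d hcv hdv hcd hcH hdH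
          have hnecd : c ≠ d := (B.adj_sub hcd).ne
          rcases eq_or_ne c S.v1 with rfl | hc1
          · rw [Equiv.swap_apply_left]
            rcases eq_or_ne d S.v2 with rfl | hd2
            · exact hdv
            · exact (S.gates hpre hcut hdv hdH (fun h => hnecd h.symm) hd2 hwv hwH).2
          rcases eq_or_ne c S.v2 with rfl | hc2
          · rw [Equiv.swap_apply_right]
            rcases eq_or_ne d S.v1 with rfl | hd1
            · exact hdv
            · exact (S.gates hpre hcut hdv hdH hd1 (fun h => hnecd h.symm) hwv hwH).1
          · rw [Equiv.swap_apply_of_ne_of_ne hc1 hc2]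
            exact hcv
        rw [phiA_pair_pos hab.1 hab.2]
        intro x hx
        rw [hv]
        rcases Sym2.mem_iff.1 hx with rfl | rfl
        · exact hσmem a b ha hb hAdj hab.1 hab.2
        · exact hσmem b a hb ha hAdj.symm hab.2 hab.1
      · rw [phiA_pair_neg hab]
        intro x hx
        rw [hv]
        rcases Sym2.mem_iff.1 hx with rfl | rfl
        · exact ha
        · exact hb

lemma flip_edgeSet {B : S.G.Subgraph} (hpre : B.coe.Preconnected)
    (hcut : ∀ w, ¬ B.IsCutVertex w) :
    (S.flip B).edgeSet = phiA S.v1 S.v2 S.H '' B.edgeSet := by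
  apply Set.Subset.antisymm
  · intro e
    induction e using Sym2.ind with
    | _ x y => exact fun he => (Subgraph.mem_edgeSet.1 he).2.1
  · rintro e' ⟨e, he, rfl⟩
    have hmem := S.mem_flip_verts hpre hcut he
    induction e using Sym2.ind with
    | _ a b =>
      have hAdj : B.Adj a b := Subgraph.mem_edgeSet.1 he
      by_cases hab : a ∈ S.H ∧ b ∈ S.H
      · rw [phiA_pair_pos hab.1 hab.2] at hmem ⊢
        refine Subgraph.mem_edgeSet.2 ⟨S.adj2_inner hab.1 hab.2 (B.adj_sub hAdj), ?_, ?_, ?_⟩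
        · exact ⟨s(a, b), he, phiA_pair_pos hab.1 hab.2⟩
        · exact hmem _ (by simp)
        · exact hmem _ (by simp)
      · rw [phiA_pair_neg hab] at hmem ⊢
        refine Subgraph.mem_edgeSet.2 ⟨S.adj2_outer hab (B.adj_sub hAdj), ?_, ?_, ?_⟩
        · exact ⟨s(a, b), he, phiA_pair_neg hab⟩
        · exact hmem _ (by simp)
        · exact hmem _ (by simp)

lemma gates_of_edge {B : S.G.Subgraph} (hpre : B.coe.Preconnected)
    (hcut : ∀ w, ¬ B.IsCutVertex w) (hnotin : ¬ B.verts ⊆ S.H) {c d : V}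
    (hc : c ∈ B.verts) (hd : d ∈ B.verts) (hne' : c ≠ d) (hcH : c ∈ S.H) (hdH : d ∈ S.H)
    (hne12 : s(c, d) ≠ s(S.v1, S.v2)) : S.v1 ∈ B.verts ∧ S.v2 ∈ B.verts := by
  obtain ⟨w, hwv, hwH⟩ := Set.not_subset.1 hnotin
  rcases eq_or_ne c S.v1 with rfl | hc1
  · rcases eq_or_ne d S.v2 with rfl | hd2
    · exact absurd rfl hne12
    rcases eq_or_ne d S.v1 with rfl | hd1
    · exact absurd rfl hne'
    · exact S.gates hpre hcut hd hdH hd1 hd2 hwv hwH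
  rcases eq_or_ne c S.v2 with rfl | hc2
  · rcases eq_or_ne d S.v1 with rfl | hd1
    · exact absurd (Sym2.eq_swap) hne12
    rcases eq_or_ne d S.v2 with rfl | hd2
    · exact absurd rfl hne'
    · exact S.gates hpre hcut hd hdH hd1 hd2 hwv hwH
  · exact S.gates hpre hcut hc hcH hc1 hc2 hwv hwH

lemma bridge_mem {B : S.G.Subgraph} (hind : B.IsInduced) (h1v : S.v1 ∈ B.verts)
    (h2v : S.v2 ∈ B.verts) :
    s(S.v1, S.v2) ∈ phiA S.v1 S.v2 S.H '' B.edgeSet :=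
  ⟨s(S.v1, S.v2), Subgraph.mem_edgeSet.2 (hind h1v h2v S.hadj), by
    rw [phiA_pair_pos S.h1 S.h2, Equiv.swap_apply_left, Equiv.swap_apply_right, Sym2.eq_swap]⟩

lemma flip_isInduced {B : S.G.Subgraph} (hGood : Good B) : (S.flip B).IsInduced := by
  obtain ⟨hind, hconn, hcut⟩ := hGood
  have hpre := hconn.preconnected
  intro x hx y hy hadj
  refine ⟨hadj, ?_, hx, hy⟩
  by_cases hin : B.verts ⊆ S.H
  · have hv : (S.flip B).verts = Equiv.swap S.v1 S.v2 '' B.verts := if_pos hin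
    rw [hv] at hx hy
    obtain ⟨x', hx', rfl⟩ := hx
    obtain ⟨y', hy', rfl⟩ := hy
    rcases (S.hflip _ _).1 hadj with ⟨_, _, hGxy⟩ | ⟨hn, _⟩
    · rw [Equiv.swap_apply_self, Equiv.swap_apply_self] at hGxy
      exact ⟨s(x', y'), Subgraph.mem_edgeSet.2 (hind hx' hy' hGxy),
        (phiA_pair_pos (hin hx') (hin hy')).symm ▸ rfl⟩
    · exact absurd ⟨(S.memH x').2 (hin hx'), (S.memH y').2 (hin hy')⟩ hn
  · have hv : (S.flip B).verts = B.verts := if_neg hin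
    rw [hv] at hx hy
    rcases (S.hflip _ _).1 hadj with ⟨hxH, hyH, hGσ⟩ | ⟨hn, hGxy⟩
    · have hxH' : x ∈ S.H := (S.memH x).1 hxH
      have hyH' : y ∈ S.H := (S.memH y).1 hyH
      have hxy : x ≠ y := hadj.ne
      have hσmem : Equiv.swap S.v1 S.v2 x ∈ B.verts ∧ Equiv.swap S.v1 S.v2 y ∈ B.verts := by
        by_cases h12 : s(x, y) = s(S.v1, S.v2)
        · rcases Sym2.eq_iff.1 h12 with ⟨rfl, rfl⟩ | ⟨rfl, rfl⟩
          · rw [Equiv.swap_apply_left, Equiv.swap_apply_right]; exact ⟨hy, hx⟩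
          · rw [Equiv.swap_apply_left, Equiv.swap_apply_right]; exact ⟨hy, hx⟩
        · obtain ⟨h1v, h2v⟩ := S.gates_of_edge hpre hcut hin hx hy hxy hxH' hyH' h12
          constructor
          · rcases eq_or_ne x S.v1 with rfl | h1
            · rw [Equiv.swap_apply_left]; exact h2v
            rcases eq_or_ne x S.v2 with rfl | h2
            · rw [Equiv.swap_apply_right]; exact h1v
            · rw [Equiv.swap_apply_of_ne_of_ne h1 h2]; exact hx
          · rcases eq_or_ne y S.v1 with rfl | h1
            · rw [Equiv.swap_apply_left]; exact h2v
            rcases eq_or_ne y S.v2 with rfl | h2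
            · rw [Equiv.swap_apply_right]; exact h1v
            · rw [Equiv.swap_apply_of_ne_of_ne h1 h2]; exact hy
      refine ⟨s(Equiv.swap S.v1 S.v2 x, Equiv.swap S.v1 S.v2 y),
        Subgraph.mem_edgeSet.2 (hind hσmem.1 hσmem.2 hGσ), ?_⟩
      rw [phiA_pair_pos hxH hyH, Equiv.swap_apply_self, Equiv.swap_apply_self]
    · exact ⟨s(x, y), Subgraph.mem_edgeSet.2 (hind hx hy hGxy), phiA_pair_neg hn⟩

lemma flip_connected {B : S.G.Subgraph} (hGood : Good B) : (S.flip B).coe.Connected := by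
  obtain ⟨hind, hconn, hcut⟩ := hGood
  have hpre := hconn.preconnected
  rw [connected_iff]
  constructor
  · rw [preconnected_iff]
    rw [S.flip_edgeSet hpre hcut]
    by_cases hin : B.verts ⊆ S.H
    · have hv : (S.flip B).verts = Equiv.swap S.v1 S.v2 '' B.verts := if_pos hin
      rw [hv]
      rintro x ⟨x', hx', rfl⟩ y ⟨y', hy', rfl⟩
      refine ((preconnected_iff B).1 hpre x' hx' y' hy').lift ?_
      intro c d hcd
      refine ⟨s(c, d), hcd, ?_⟩
      rw [phiA_pair_pos (hin (B.edge_vert (Subgraph.mem_edgeSet.1 hcd)))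
        (hin (B.edge_vert (Subgraph.mem_edgeSet.1 hcd).symm))]
    · have hv : (S.flip B).verts = B.verts := if_neg hin
      rw [hv]
      intro x hx y hy
      refine ((preconnected_iff B).1 hpre x hx y hy).ind ?_ (fun _ => .refl)
        (fun _ _ _ => .trans)
      intro c d hcd
      have hc : c ∈ B.verts := B.edge_vert (Subgraph.mem_edgeSet.1 hcd)
      have hd : d ∈ B.verts := B.edge_vert (Subgraph.mem_edgeSet.1 hcd).symm
      have hne' : c ≠ d := (B.adj_sub (Subgraph.mem_edgeSet.1 hcd)).ne
      by_cases hcdH : c ∈ S.H ∧ d ∈ S.H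
      · have hstep : ERel (phiA S.v1 S.v2 S.H '' B.edgeSet)
            (Equiv.swap S.v1 S.v2 c) (Equiv.swap S.v1 S.v2 d) :=
          .single ⟨s(c, d), hcd, phiA_pair_pos hcdH.1 hcdH.2⟩
        by_cases h12 : s(c, d) = s(S.v1, S.v2)
        · rcases Sym2.eq_iff.1 h12 with ⟨rfl, rfl⟩ | ⟨rfl, rfl⟩ <;>
            · rw [Equiv.swap_apply_left, Equiv.swap_apply_right] at hstep
              exact hstep.symm
        · obtain ⟨h1v, h2v⟩ := S.gates_of_edge hpre hcut hin hc hd hne' hcdH.1 hcdH.2 h12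
          have hbr : ∀ z, ERel (phiA S.v1 S.v2 S.H '' B.edgeSet) z (Equiv.swap S.v1 S.v2 z) := by
            intro z
            rcases eq_or_ne z S.v1 with rfl | h1
            · rw [Equiv.swap_apply_left]
              exact .single (S.bridge_mem hind h1v h2v)
            rcases eq_or_ne z S.v2 with rfl | h2
            · rw [Equiv.swap_apply_right]
              exact (ERel.single (S.bridge_mem hind h1v h2v)).symm
            · rw [Equiv.swap_apply_of_ne_of_ne h1 h2]
              exact .refl
          exact ((hbr c).trans hstep).trans (hbr d).symm
      · exact .single ⟨s(c, d), hcd, phiA_pair_neg hcdH⟩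
  · have hne : B.verts.Nonempty := by
      obtain ⟨⟨x, hx⟩⟩ := hconn.nonempty
      exact ⟨x, hx⟩
    by_cases hin : B.verts ⊆ S.H
    · have hv : (S.flip B).verts = Equiv.swap S.v1 S.v2 '' B.verts := if_pos hin
      rw [hv]
      exact (hne.image _).to_subtype
    · have hv : (S.flip B).verts = B.verts := if_neg hin
      rw [hv]
      exact hne.to_subtype

lemma swap_notMem_sym2 {z c d : V} (hz : z ∉ s(c, d)) :
    Equiv.swap S.v1 S.v2 z ∉ s(Equiv.swap S.v1 S.v2 c, Equiv.swap S.v1 S.v2 d) := by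
  intro h
  rcases Sym2.mem_iff.1 h with h' | h'
  · exact hz (by rw [(Equiv.swap S.v1 S.v2).injective h']; simp)
  · exact hz (by rw [(Equiv.swap S.v1 S.v2).injective h']; simp [Sym2.mem_iff])

/-- No cut vertex at `v1` in the flipped subgraph. -/
lemma flip_notCut_v1 {B : S.G.Subgraph} (hGood : Good B) :
    ¬ (S.flip B).IsCutVertex S.v1 := by
  obtain ⟨hind, hconn, hcut⟩ := hGood
  have hpre := hconn.preconnected
  have hfE := S.flip_edgeSet hpre hcut
  apply notCut_of
  by_cases hin : B.verts ⊆ S.H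
  · -- inner case: v1 = swap v2
    have hv : (S.flip B).verts = Equiv.swap S.v1 S.v2 '' B.verts := if_pos hin
    rw [hv]
    rintro x ⟨x', hx', rfl⟩ hx1 y ⟨y', hy', rfl⟩ hy1
    have hx2 : x' ≠ S.v2 := by
      rintro rfl
      exact hx1 (by rw [Equiv.swap_apply_right])
    have hy2 : y' ≠ S.v2 := by
      rintro rfl
      exact hy1 (by rw [Equiv.swap_apply_right])
    refine (avoid hpre hcut (v := S.v2) hx' hy' hx2 hy2).lift ?_
    intro c d hcd
    obtain ⟨hcd', hv2⟩ := hcd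
    have hcH : c ∈ S.H := hin (B.edge_vert (Subgraph.mem_edgeSet.1 hcd'))
    have hdH : d ∈ S.H := hin (B.edge_vert (Subgraph.mem_edgeSet.1 hcd').symm)
    refine ⟨?_, ?_⟩
    · rw [hfE]
      exact ⟨s(c, d), hcd', phiA_pair_pos hcH hdH⟩
    · have := S.swap_notMem_sym2 (z := S.v2) (c := c) (d := d) hv2
      rwa [Equiv.swap_apply_right] at this
  · have hv : (S.flip B).verts = B.verts := if_neg hin
    rw [hv]
    by_cases hstrad : ∃ a0 ∈ B.verts, a0 ∈ S.H ∧ a0 ≠ S.v1 ∧ a0 ≠ S.v2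
    · -- straddling case
      obtain ⟨w, hwv, hwH⟩ := Set.not_subset.1 hin
      obtain ⟨a0, ha0v, ha0H, ha01, ha02⟩ := hstrad
      obtain ⟨h1v, h2v⟩ := S.gates hpre hcut ha0v ha0H ha01 ha02 hwv hwH
      have key : ∀ x ∈ B.verts, x ≠ S.v1 →
          ERel {e | e ∈ (S.flip B).edgeSet ∧ S.v1 ∉ e} x S.v2 := by
        intro x hx hx1
        by_cases hxH : x ∈ S.H
        · rcases eq_or_ne x S.v2 with rfl | hx2
          · exact .refl
          -- inner vertex: prefix towards v1 inside H, flip last edge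
          have hch := avoid hpre hcut (v := S.v2) hx h1v hx2 S.hne
          obtain ⟨a, b, ⟨⟨heB, hv2e⟩, hPa, hPb, hprefix⟩⟩ :=
            prefixCross (P := fun z => z ∈ S.H ∧ z ≠ S.v1) hch (by simp) ⟨hxH, hx1⟩
          have hb1 : b = S.v1 := by
            rcases not_and_or.1 hPb with hbH | hb1
            · exfalso
              have ha2 : a ≠ S.v2 := by
                intro h
                exact hv2e (h ▸ Sym2.mem_mk_left a b)
              exact hbH (S.hHedge a b (B.adj_sub (Subgraph.mem_edgeSet.1 heB))
                hPa.1 hPa.2 ha2)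
            · simpa using hb1
          subst hb1
          have ha2 : a ≠ S.v2 := fun h => hv2e (h ▸ Sym2.mem_mk_left a S.v1)
          have hstep : ERel {e | e ∈ (S.flip B).edgeSet ∧ S.v1 ∉ e} a S.v2 := by
            refine .single ⟨?_, ?_⟩
            · rw [hfE]
              refine ⟨s(a, S.v1), heB, ?_⟩
              rw [phiA_pair_pos hPa.1 S.h1, Equiv.swap_apply_left,
                Equiv.swap_apply_of_ne_of_ne hPa.2 ha2]
            · rw [Sym2.mem_iff]
              rintro (rfl | h)
              · exact hPa.2 rfl
              · exact S.hne h
          refine (hprefix.mono ?_).trans hstep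
          rintro e ⟨⟨heB', hv2e'⟩, hall⟩
          induction e using Sym2.ind with
          | _ c d =>
            have hcH : c ∈ S.H := (hall c (Sym2.mem_mk_left c d)).1
            have hdH : d ∈ S.H := (hall d (Sym2.mem_mk_right c d)).1
            have hc1 : c ≠ S.v1 := (hall c (Sym2.mem_mk_left c d)).2
            have hd1 : d ≠ S.v1 := (hall d (Sym2.mem_mk_right c d)).2
            have hc2 : c ≠ S.v2 := fun h => hv2e' (h ▸ Sym2.mem_mk_left c d)
            have hd2 : d ≠ S.v2 := fun h => hv2e' (h ▸ Sym2.mem_mk_right c d)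
            refine ⟨?_, ?_⟩
            · rw [hfE]
              refine ⟨s(c, d), heB', ?_⟩
              rw [phiA_pair_pos hcH hdH, Equiv.swap_apply_of_ne_of_ne hc1 hc2,
                Equiv.swap_apply_of_ne_of_ne hd1 hd2]
            · rw [Sym2.mem_iff]
              rintro (rfl | rfl)
              · exact hc1 rfl
              · exact hd1 rfl
        · -- outer vertex: prefix outside H, crossing edge kept
          have hv2H : ¬ (S.v2 ∉ S.H) := fun h => h S.h2
          have hch := avoid hpre hcut (v := S.v1) hx h2v hx1 S.hne.symm
          obtain ⟨a, b, ⟨⟨heB, hv1e⟩, hPa, hPb, hprefix⟩⟩ :=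
            prefixCross (P := fun z => z ∉ S.H) hch hv2H hxH
          have hbH : b ∈ S.H := not_not.1 hPb
          have hb2 : b = S.v2 := by
            by_contra hb2
            have hb1 : b ≠ S.v1 := fun h => hv1e (h ▸ Sym2.mem_mk_right a b)
            exact hPa (S.hHedge b a (B.adj_sub (Subgraph.mem_edgeSet.1 heB)).symm
              hbH hb1 hb2)
          subst hb2
          have hstep : ERel {e | e ∈ (S.flip B).edgeSet ∧ S.v1 ∉ e} a S.v2 := by
            refine .single ⟨?_, hv1e⟩
            rw [hfE]
            exact ⟨s(a, S.v2), heB, phiA_pair_neg (fun h => hPa h.1)⟩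
          refine (hprefix.mono ?_).trans hstep
          rintro e ⟨⟨heB', hv1e'⟩, hall⟩
          refine ⟨?_, hv1e'⟩
          rw [hfE]
          induction e using Sym2.ind with
          | _ c d =>
            exact ⟨s(c, d), heB', phiA_pair_neg
              (fun h => (hall c (Sym2.mem_mk_left c d)) h.1)⟩
      intro x hx hx1 y hy hy1
      exact (key x hx hx1).trans (key y hy hy1).symm
    · -- no interior vertices of H: every surviving edge is fixed
      push_neg at hstrad
      intro x hx hx1 y hy hy1
      refine (avoid hpre hcut (v := S.v1) hx hy hx1 hy1).mono ?_
      rintro e ⟨heB, hv1e⟩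
      induction e using Sym2.ind with
      | _ c d =>
        have hc : c ∈ B.verts := B.edge_vert (Subgraph.mem_edgeSet.1 heB)
        have hd : d ∈ B.verts := B.edge_vert (Subgraph.mem_edgeSet.1 heB).symm
        have hc1 : c ≠ S.v1 := fun h => hv1e (h ▸ Sym2.mem_mk_left c d)
        have hd1 : d ≠ S.v1 := fun h => hv1e (h ▸ Sym2.mem_mk_right c d)
        have hne' : c ≠ d := (B.adj_sub (Subgraph.mem_edgeSet.1 heB)).ne
        have hcd : ¬ (c ∈ S.H ∧ d ∈ S.H) := by
          rintro ⟨hcH, hdH⟩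
          rcases hstrad c hc hcH hc1 with rfl
          rcases hstrad d hd hdH hd1 with rfl
          exact hne' rfl
        refine ⟨?_, hv1e⟩
        rw [hfE]
        exact ⟨s(c, d), heB, phiA_pair_neg hcd⟩

lemma flip_noCut {B : S.G.Subgraph} (hGood : Good B) :
    ∀ v, ¬ (S.flip B).IsCutVertex v := by
  intro v
  rcases eq_or_ne v S.v1 with rfl | hv1
  · exact S.flip_notCut_v1 hGood
  rcases eq_or_ne v S.v2 with rfl | hv2
  · have := S.swapV.flip_notCut_v1 (B := B) hGood
    rwa [S.swapV_flip] at this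
  obtain ⟨hind, hconn, hcut⟩ := hGood
  have hpre := hconn.preconnected
  have hfE := S.flip_edgeSet hpre hcut
  apply notCut_of
  by_cases hin : B.verts ⊆ S.H
  · have hvv : (S.flip B).verts = Equiv.swap S.v1 S.v2 '' B.verts := if_pos hin
    rw [hvv]
    rintro x ⟨x', hx', rfl⟩ hx1 y ⟨y', hy', rfl⟩ hy1
    have hswapv : Equiv.swap S.v1 S.v2 v = v := Equiv.swap_apply_of_ne_of_ne hv1 hv2
    have hx2 : x' ≠ v := fun h => hx1 (by rw [h, hswapv])
    have hy2 : y' ≠ v := fun h => hy1 (by rw [h, hswapv])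
    refine (avoid hpre hcut (v := v) hx' hy' hx2 hy2).lift ?_
    rintro c d ⟨hcd', hve⟩
    have hcH : c ∈ S.H := hin (B.edge_vert (Subgraph.mem_edgeSet.1 hcd'))
    have hdH : d ∈ S.H := hin (B.edge_vert (Subgraph.mem_edgeSet.1 hcd').symm)
    refine ⟨?_, ?_⟩
    · rw [hfE]
      exact ⟨s(c, d), hcd', phiA_pair_pos hcH hdH⟩
    · have := S.swap_notMem_sym2 (z := v) (c := c) (d := d) hve
      rwa [hswapv] at this
  · have hvv : (S.flip B).verts = B.verts := if_neg hin
    rw [hvv]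
    intro x hx hx1 y hy hy1
    refine (avoid hpre hcut (v := v) hx hy hx1 hy1).ind ?_ (fun _ => .refl)
      (fun _ _ _ => .trans)
    rintro c d ⟨hcd', hve⟩
    have hc : c ∈ B.verts := B.edge_vert (Subgraph.mem_edgeSet.1 hcd')
    have hd : d ∈ B.verts := B.edge_vert (Subgraph.mem_edgeSet.1 hcd').symm
    have hne' : c ≠ d := (B.adj_sub (Subgraph.mem_edgeSet.1 hcd')).ne
    have hcv : c ≠ v := fun h => hve (h ▸ Sym2.mem_mk_left c d)
    have hdv : d ≠ v := fun h => hve (h ▸ Sym2.mem_mk_right c d)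
    by_cases hcdH : c ∈ S.H ∧ d ∈ S.H
    · have hstep : ERel {e | e ∈ (S.flip B).edgeSet ∧ v ∉ e}
          (Equiv.swap S.v1 S.v2 c) (Equiv.swap S.v1 S.v2 d) := by
        refine .single ⟨?_, ?_⟩
        · rw [hfE]
          exact ⟨s(c, d), hcd', phiA_pair_pos hcdH.1 hcdH.2⟩
        · have := S.swap_notMem_sym2 (z := v) (c := c) (d := d) hve
          rwa [Equiv.swap_apply_of_ne_of_ne hv1 hv2] at this
      by_cases h12 : s(c, d) = s(S.v1, S.v2)
      · rcases Sym2.eq_iff.1 h12 with ⟨rfl, rfl⟩ | ⟨rfl, rfl⟩ <;>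
          · rw [Equiv.swap_apply_left, Equiv.swap_apply_right] at hstep
            exact hstep.symm
      · obtain ⟨h1v, h2v⟩ := S.gates_of_edge hpre hcut hin hc hd hne' hcdH.1 hcdH.2 h12
        have hbrmem : s(S.v1, S.v2) ∈ {e | e ∈ (S.flip B).edgeSet ∧ v ∉ e} := by
          refine ⟨?_, ?_⟩
          · rw [hfE]; exact S.bridge_mem hind h1v h2v
          · rw [Sym2.mem_iff]
            rintro (rfl | rfl)
            · exact hv1 rfl
            · exact hv2 rfl
        have hbr : ∀ z, ERel {e | e ∈ (S.flip B).edgeSet ∧ v ∉ e} z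
            (Equiv.swap S.v1 S.v2 z) := by
          intro z
          rcases eq_or_ne z S.v1 with rfl | h1
          · rw [Equiv.swap_apply_left]
            exact .single hbrmem
          rcases eq_or_ne z S.v2 with rfl | h2
          · rw [Equiv.swap_apply_right]
            exact (ERel.single hbrmem).symm
          · rw [Equiv.swap_apply_of_ne_of_ne h1 h2]
            exact .refl
        exact ((hbr c).trans hstep).trans (hbr d).symm
    · refine .single ⟨?_, hve⟩
      rw [hfE]
      exact ⟨s(c, d), hcd', phiA_pair_neg hcdH⟩

lemma flip_good {B : S.G.Subgraph} (hGood : Good B) : Good (S.flip B) :=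
  ⟨S.flip_isInduced hGood, S.flip_connected hGood, S.flip_noCut hGood⟩

lemma flip_flip {B : S.G.Subgraph} (hGood : Good B) : S.unflip (S.flip B) = B := by
  obtain ⟨hind, hconn, hcut⟩ := hGood
  have hpre := hconn.preconnected
  have hfE := S.flip_edgeSet hpre hcut
  have hcomp : phiA S.v1 S.v2 S.H '' (S.flip B).edgeSet = B.edgeSet := by
    rw [hfE, ← Set.image_comp]
    have h : phiA S.v1 S.v2 S.H ∘ phiA S.v1 S.v2 S.H = id := funext (phiA_phiA S.h1 S.h2)
    rw [h, Set.image_id]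
  have hverts : (if (S.flip B).verts ⊆ S.H then Equiv.swap S.v1 S.v2 '' (S.flip B).verts
      else (S.flip B).verts) = B.verts := by
    by_cases hin : B.verts ⊆ S.H
    · have hv : (S.flip B).verts = Equiv.swap S.v1 S.v2 '' B.verts := if_pos hin
      rw [hv, if_pos (by rintro x ⟨x', hx', rfl⟩; exact (S.memH x').2 (hin hx'))]
      rw [← Set.image_comp]
      have h : ⇑(Equiv.swap S.v1 S.v2) ∘ ⇑(Equiv.swap S.v1 S.v2) = id :=
        funext fun z => Equiv.swap_apply_self _ _ z
      rw [h, Set.image_id]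
    · have hv : (S.flip B).verts = B.verts := if_neg hin
      rw [hv, if_neg hin]
  apply Subgraph.ext
  · exact hverts
  · funext x y
    show (S.G.Adj x y ∧ s(x, y) ∈ phiA S.v1 S.v2 S.H '' (S.flip B).edgeSet ∧
      x ∈ (if (S.flip B).verts ⊆ S.H then Equiv.swap S.v1 S.v2 '' (S.flip B).verts
        else (S.flip B).verts) ∧
      y ∈ (if (S.flip B).verts ⊆ S.H then Equiv.swap S.v1 S.v2 '' (S.flip B).verts
        else (S.flip B).verts)) = B.Adj x y
    rw [hcomp, hverts]
    apply propext
    constructor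
    · rintro ⟨_, hmem, _, _⟩
      exact Subgraph.mem_edgeSet.1 hmem
    · intro h
      exact ⟨B.adj_sub h, Subgraph.mem_edgeSet.2 h, B.edge_vert h, B.edge_vert h.symm⟩

lemma flip_le {D : S.G.Subgraph} (hD : Good D) (hDe : D.edgeSet.Nonempty)
    {C : S.G2.Subgraph} (hC : Good C) (hle : S.flip D ≤ C) : D ≤ S.unflip C := by
  obtain ⟨hindD, hconnD, hcutD⟩ := hD
  have hpreD := hconnD.preconnected
  obtain ⟨hindC, hconnC, hcutC⟩ := hC
  have hpreC := hconnC.preconnected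
  have hfED := S.flip_edgeSet hpreD hcutD
  have hEsub : phiA S.v1 S.v2 S.H '' D.edgeSet ⊆ C.edgeSet := by
    rw [← hfED]
    exact Subgraph.edgeSet_mono hle
  have hDv : (S.flip D).verts ⊆ C.verts := hle.1
  have hvsub : D.verts ⊆ (if C.verts ⊆ S.H then Equiv.swap S.v1 S.v2 '' C.verts
      else C.verts) := by
    by_cases hinD : D.verts ⊆ S.H
    · have hfv : (S.flip D).verts = Equiv.swap S.v1 S.v2 '' D.verts := if_pos hinD
      have hDσ : ∀ x ∈ D.verts, Equiv.swap S.v1 S.v2 x ∈ C.verts := by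
        intro x hx
        exact hDv (hfv ▸ ⟨x, hx, rfl⟩)
      by_cases hinC : C.verts ⊆ S.H
      · rw [if_pos hinC]
        intro x hx
        exact ⟨Equiv.swap S.v1 S.v2 x, hDσ x hx, by simp⟩
      · rw [if_neg hinC]
        intro x hx
        rcases eq_or_ne x S.v1 with rfl | hx1
        on_goal 2 => rcases eq_or_ne x S.v2 with rfl | hx2
        on_goal 3 =>
          have := hDσ x hx
          rwa [Equiv.swap_apply_of_ne_of_ne hx1 hx2] at this
        all_goals {
          obtain ⟨e, he⟩ := hDe
          induction e using Sym2.ind with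
          | _ a b =>
            have haD : a ∈ D.verts := D.edge_vert (Subgraph.mem_edgeSet.1 he)
            have hbD : b ∈ D.verts := D.edge_vert (Subgraph.mem_edgeSet.1 he).symm
            have hab : a ≠ b := (D.adj_sub (Subgraph.mem_edgeSet.1 he)).ne
            by_cases h12 : s(a, b) = s(S.v1, S.v2)
            · have hboth : S.v1 ∈ D.verts ∧ S.v2 ∈ D.verts := by
                rcases Sym2.eq_iff.1 h12 with ⟨rfl, rfl⟩ | ⟨rfl, rfl⟩
                · exact ⟨haD, hbD⟩
                · exact ⟨hbD, haD⟩
              first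
              | (have := hDσ S.v2 hboth.2; rwa [Equiv.swap_apply_right] at this)
              | (have := hDσ S.v1 hboth.1; rwa [Equiv.swap_apply_left] at this)
            · -- some endpoint of the edge lies in H \ {v1, v2}
              obtain ⟨z, hzD, hz1, hz2⟩ : ∃ z, z ∈ D.verts ∧ z ≠ S.v1 ∧ z ≠ S.v2 := by
                rcases eq_or_ne a S.v1 with rfl | ha1
                · rcases eq_or_ne b S.v2 with rfl | hb2
                  · exact absurd rfl h12
                  · exact ⟨b, hbD, fun h => hab h.symm, hb2⟩
                rcases eq_or_ne a S.v2 with rfl | ha2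
                · rcases eq_or_ne b S.v1 with rfl | hb1
                  · exact absurd Sym2.eq_swap h12
                  · exact ⟨b, hbD, hb1, fun h => hab h.symm⟩
                · exact ⟨a, haD, ha1, ha2⟩
              have hzC : z ∈ C.verts := by
                have := hDσ z hzD
                rwa [Equiv.swap_apply_of_ne_of_ne hz1 hz2] at this
              have hzH : z ∈ S.H := hinD hzD
              obtain ⟨w, hwC, hwH⟩ := Set.not_subset.1 hinC
              have hg := S.symm.gates hpreC hcutC hzC hzH hz1 hz2 hwC hwH
              first
              | exact hg.1
              | exact hg.2
        }
    · have hfv : (S.flip D).verts = D.verts := if_neg hinD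
      by_cases hinC : C.verts ⊆ S.H
      · exact absurd (fun x hx => hinC (hDv (hfv ▸ hx))) hinD
      · rw [if_neg hinC]
        exact hfv ▸ hDv
  refine ⟨hvsub, ?_⟩
  intro x y hxy
  refine ⟨D.adj_sub hxy, ?_, hvsub (D.edge_vert hxy), hvsub (D.edge_vert hxy.symm)⟩
  refine ⟨phiA S.v1 S.v2 S.H s(x, y), hEsub ⟨s(x, y), Subgraph.mem_edgeSet.2 hxy, rfl⟩, ?_⟩
  exact phiA_phiA S.h1 S.h2 _

lemma sym2_all {x y : V} : (∀ z ∈ s(x, y), z ∈ S.H) ↔ (x ∈ S.H ∧ y ∈ S.H) := by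
  constructor
  · intro h
    exact ⟨h x (Sym2.mem_mk_left x y), h y (Sym2.mem_mk_right x y)⟩
  · rintro ⟨hx, hy⟩ z hz
    rcases Sym2.mem_iff.1 hz with rfl | rfl
    · exact hx
    · exact hy

/-- The subgraph of `G` consisting of edges inside `H`. -/
def inHGraph : SimpleGraph V where
  Adj x y := S.G.Adj x y ∧ x ∈ S.H ∧ y ∈ S.H
  symm := by constructor; rintro x y ⟨h, hx, hy⟩; exact ⟨h.symm, hy, hx⟩
  loopless := by constructor; rintro x ⟨h, _, _⟩; exact S.G.loopless.irrefl x h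

/-- Mapping the inside of `H` into the flipped graph using the swap. -/
def inHom : S.inHGraph →g S.G2 where
  toFun := Equiv.swap S.v1 S.v2
  map_rel' := fun h => S.adj2_inner h.2.1 h.2.2 h.1

lemma inHom_coe : ⇑S.inHom = ⇑(Equiv.swap S.v1 S.v2) := rfl

lemma tIn_mem {s t : V} (p : S.G.Walk s t) (hall : ∀ e ∈ p.edges, ∀ z ∈ e, z ∈ S.H) :
    ∀ e ∈ p.edges, e ∈ S.inHGraph.edgeSet := by
  intro e he
  induction e using Sym2.ind with
  | _ x y =>
    exact ⟨p.edges_subset_edgeSet he, ((S.sym2_all).1 (hall _ he)).1,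
      ((S.sym2_all).1 (hall _ he)).2⟩

/-- Transfer of an inner walk to the flipped graph. -/
def tIn {s t : V} (p : S.G.Walk s t) (hall : ∀ e ∈ p.edges, ∀ z ∈ e, z ∈ S.H) :
    S.G2.Walk (Equiv.swap S.v1 S.v2 s) (Equiv.swap S.v1 S.v2 t) :=
  (p.transfer S.inHGraph (S.tIn_mem p hall)).map S.inHom

lemma tIn_edges {s t : V} (p : S.G.Walk s t) (hall) :
    (S.tIn p hall).edges = p.edges.map (Sym2.map (Equiv.swap S.v1 S.v2)) := by
  have h := Walk.edges_map (f := S.inHom) (p := p.transfer S.inHGraph (S.tIn_mem p hall))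
  rw [Walk.edges_transfer] at h
  exact h.trans (congrArg (fun f => List.map (Sym2.map f) p.edges) S.inHom_coe)

lemma tIn_support {s t : V} (p : S.G.Walk s t) (hall) :
    (S.tIn p hall).support = p.support.map (Equiv.swap S.v1 S.v2) := by
  have h := Walk.support_map (f := S.inHom) (p := p.transfer S.inHGraph (S.tIn_mem p hall))
  rw [Walk.support_transfer] at h
  exact h.trans (congrArg (fun f => List.map f p.support) S.inHom_coe)

lemma tIn_length {s t : V} (p : S.G.Walk s t) (hall) :
    (S.tIn p hall).length = p.length := by
  have h := Walk.length_map (f := S.inHom) (p := p.transfer S.inHGraph (S.tIn_mem p hall))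
  rw [Walk.length_transfer] at h
  exact h

lemma tIn_isPath {s t : V} {p : S.G.Walk s t} (hp : p.IsPath) (hall) :
    (S.tIn p hall).IsPath :=
  Walk.map_isPath_of_injective (Equiv.injective _) (hp.transfer _)

lemma tIn_phi {s t : V} (p : S.G.Walk s t) (hall) :
    ∀ f ∈ (S.tIn p hall).edges, ∃ e ∈ p.edges, f = phiA S.v1 S.v2 S.H e := by
  intro f hf
  rw [S.tIn_edges] at hf
  obtain ⟨e, he, rfl⟩ := List.mem_map.1 hf
  refine ⟨e, he, ?_⟩
  induction e using Sym2.ind with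
  | _ x y =>
    rw [Sym2.map_pair_eq, phiA_pair_pos ((S.sym2_all.1 (hall _ he)).1)
      ((S.sym2_all.1 (hall _ he)).2)]

lemma tIn_all {s t : V} (p : S.G.Walk s t) (hall) :
    ∀ f ∈ (S.tIn p hall).edges, ∀ z ∈ f, z ∈ S.H := by
  intro f hf
  rw [S.tIn_edges] at hf
  obtain ⟨e, he, rfl⟩ := List.mem_map.1 hf
  induction e using Sym2.ind with
  | _ x y =>
    rw [Sym2.map_pair_eq, sym2_all]
    exact ⟨(S.memH x).2 (S.sym2_all.1 (hall _ he)).1, (S.memH y).2 (S.sym2_all.1 (hall _ he)).2⟩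

lemma tOut_mem {s t : V} (p : S.G.Walk s t) (hout : ∀ e ∈ p.edges, ¬ ∀ z ∈ e, z ∈ S.H) :
    ∀ e ∈ p.edges, e ∈ S.G2.edgeSet := by
  intro e he
  induction e using Sym2.ind with
  | _ x y =>
    refine S.adj2_outer (fun h => (hout _ he) (S.sym2_all.2 h)) (p.edges_subset_edgeSet he)

/-- Transfer of an outer walk to the flipped graph. -/
def tOut {s t : V} (p : S.G.Walk s t) (hout : ∀ e ∈ p.edges, ¬ ∀ z ∈ e, z ∈ S.H) :
    S.G2.Walk s t :=
  p.transfer S.G2 (S.tOut_mem p hout)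

lemma tOut_edges {s t : V} (p : S.G.Walk s t) (hout) :
    (S.tOut p hout).edges = p.edges := Walk.edges_transfer _ _

lemma tOut_support {s t : V} (p : S.G.Walk s t) (hout) :
    (S.tOut p hout).support = p.support := Walk.support_transfer _ _

lemma tOut_length {s t : V} (p : S.G.Walk s t) (hout) :
    (S.tOut p hout).length = p.length := Walk.length_transfer _ _

lemma tOut_isPath {s t : V} {p : S.G.Walk s t} (hp : p.IsPath) (hout) :
    (S.tOut p hout).IsPath := hp.transfer _

lemma tOut_phi {s t : V} (p : S.G.Walk s t) (hout) :
    ∀ f ∈ (S.tOut p hout).edges, ∃ e ∈ p.edges, f = phiA S.v1 S.v2 S.H e := by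
  intro f hf
  rw [S.tOut_edges] at hf
  refine ⟨f, hf, ?_⟩
  induction f using Sym2.ind with
  | _ x y =>
    rw [phiA_pair_neg (fun h => (hout _ hf) (S.sym2_all.2 h))]

lemma seg_inner {g t : V} (hgt : ({g, t} : Set V) = {S.v1, S.v2}) :
    ∀ {x : V} (p : S.G.Walk x t), p.IsPath → g ∉ p.support → x ∈ S.H →
      ∀ z ∈ p.support, z ∈ S.H := by
  intro x p
  induction p with
  | nil =>
    intro _ _ hx z hz
    rw [Walk.support_nil, List.mem_singleton] at hz
    subst hz
    exact hx
  | @cons x c t hadj p ih =>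
    intro hp hg hx z hz
    rw [Walk.support_cons, List.mem_cons] at hg hz
    push_neg at hg
    rcases hz with rfl | hz
    · exact hx
    · have hxt : x ≠ t := by
        intro h
        subst h
        have := hp.support_nodup
        rw [Walk.support_cons] at this
        exact (List.nodup_cons.1 this).1 p.end_mem_support
      have hx12 : x ≠ S.v1 ∧ x ≠ S.v2 := by
        constructor <;>
        · intro h
          have : x ∈ ({S.v1, S.v2} : Set V) := by rw [h]; simp
          rw [← hgt] at this
          rcases this with h' | h'
          · exact hg.1 h'.symm
          · rw [Set.mem_singleton_iff] at h'
            exact hxt h'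
      have hc : c ∈ S.H := S.hHedge x c hadj hx hx12.1 hx12.2
      exact ih hgt hp.of_cons hg.2 hc z hz

lemma seg_outer {g t : V} (hgt : ({g, t} : Set V) = {S.v1, S.v2}) :
    ∀ {x : V} (p : S.G.Walk x t), p.IsPath → g ∉ p.support → x ∉ S.H →
      ∀ e ∈ p.edges, ¬ (∀ z ∈ e, z ∈ S.H) := by
  intro x p
  induction p with
  | nil => intro _ _ _ e he; simp at he
  | @cons x c t hadj p ih =>
    intro hp hg hx e he
    rw [Walk.support_cons, List.mem_cons] at hg
    push_neg at hg
    rw [Walk.edges_cons, List.mem_cons] at he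
    rcases he with rfl | he
    · intro hall
      exact hx (S.sym2_all.1 hall).1
    · by_cases hcH : c ∈ S.H
      · -- c must be the gate t, and then p is nil, contradicting he
        exfalso
        have hcg : c ≠ g := by
          intro h
          subst h
          exact hg.2 (Walk.start_mem_support p)
        have hc12 : c = S.v1 ∨ c = S.v2 := by
          by_contra hcon
          push_neg at hcon
          exact hx (S.hHedge c x hadj.symm hcH hcon.1 hcon.2)
        have hct : c = t := by
          have : c ∈ ({S.v1, S.v2} : Set V) := by
            rcases hc12 with rfl | rfl <;> simp
          rw [← hgt] at this
          rcases this with h' | h'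
          · exact absurd h' hcg
          · exact h'
        subst hct
        have : p = Walk.nil := Walk.isPath_iff_eq_nil.1 hp.of_cons
        rw [this] at he
        simp at he
      · exact ih hgt hp.of_cons hg.2 hcH e he

lemma arc {sv tv : V} (hgt : ({sv, tv} : Set V) = {S.v1, S.v2}) (hne' : sv ≠ tv)
    (p : S.G.Walk sv tv) (hp : p.IsPath) :
    (∀ e ∈ p.edges, ∀ z ∈ e, z ∈ S.H) ∨ (∀ e ∈ p.edges, ¬ ∀ z ∈ e, z ∈ S.H) := by
  have hsvH : sv ∈ S.H := by
    have : sv ∈ ({S.v1, S.v2} : Set V) := by rw [← hgt]; simp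
    rcases this with h | h
    · rw [h]; exact S.h1
    · rw [Set.mem_singleton_iff] at h; rw [h]; exact S.h2
  cases p with
  | nil => exact absurd rfl hne'
  | @cons _ c _ hadj q =>
    obtain ⟨hq, hsv⟩ := (Walk.cons_isPath_iff hadj q).1 hp
    by_cases hcH : c ∈ S.H
    · left
      have hsub := S.seg_inner hgt q hq hsv hcH
      intro e he
      rw [Walk.edges_cons, List.mem_cons] at he
      rcases he with rfl | he
      · exact S.sym2_all.2 ⟨hsvH, hcH⟩
      · intro z hz
        exact hsub z (mem_support_of_mem_edges q he hz)
    · right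
      have hout := S.seg_outer hgt q hq hsv hcH
      intro e he
      rw [Walk.edges_cons, List.mem_cons] at he
      rcases he with rfl | he
      · intro hall
        exact hcH (S.sym2_all.1 hall).2
      · exact hout e he

end Setup

lemma glue {K : SimpleGraph V} {a b : V} (hab : a ≠ b) (p : K.Walk a b) (q : K.Walk b a)
    (hp : p.IsPath) (hq : q.IsPath) (hdisj : ∀ e ∈ p.edges, e ∉ q.edges)
    (hsupp : ∀ z ∈ p.support, z ∈ q.support → z = a ∨ z = b) :
    (p.append q).IsCycle := by
  rw [Walk.isCycle_def]
  refine ⟨?_, ?_, ?_⟩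
  · rw [Walk.isTrail_def, Walk.edges_append]
    exact (hp.isTrail.edges_nodup).append (hq.isTrail.edges_nodup) hdisj
  · intro h
    have hlen := congrArg Walk.length h
    rw [Walk.length_append, Walk.length_nil] at hlen
    exact hab (Walk.eq_of_length_eq_zero (by omega : p.length = 0))
  · rw [Walk.tail_support_append]
    refine (List.Nodup.append ?_ ?_ ?_)
    · have := hp.support_nodup
      rw [Walk.support_eq_cons] at this
      exact (List.nodup_cons.1 this).2
    · have := hq.support_nodup
      rw [Walk.support_eq_cons] at this
      exact (List.nodup_cons.1 this).2
    · intro z hz1 hz2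
      have hz1' : z ∈ p.support := by
        rw [Walk.support_eq_cons]
        exact List.mem_cons_of_mem _ hz1
      have hz2' : z ∈ q.support := by
        rw [Walk.support_eq_cons]
        exact List.mem_cons_of_mem _ hz2
      rcases hsupp z hz1' hz2' with rfl | rfl
      · have := hp.support_nodup
        rw [Walk.support_eq_cons] at this
        exact (List.nodup_cons.1 this).1 hz1
      · have := hq.support_nodup
        rw [Walk.support_eq_cons] at this
        exact (List.nodup_cons.1 this).1 hz2

lemma exists_adj {K : SimpleGraph V} (hconn : K.Connected) {w1 w2 : V} (hadj : K.Adj w1 w2)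
    (x : V) : ∃ y, K.Adj x y := by
  obtain ⟨w⟩ := hconn.preconnected x w1
  cases w with
  | nil => exact ⟨w2, hadj⟩
  | cons h _ => exact ⟨_, h⟩

lemma block_edge {K : SimpleGraph V} (hconn : K.Connected) {w1 w2 : V} (hadj : K.Adj w1 w2)
    {B : K.Subgraph} (hB : B.IsBlock) : B.edgeSet.Nonempty := by
  by_contra hemp
  have hE : B.edgeSet = ∅ := Set.not_nonempty_iff_eq_empty.1 hemp
  obtain ⟨⟨x, hx⟩⟩ := hB.2.1.nonempty
  have hsingle : ∀ y ∈ B.verts, y = x := by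
    intro y hy
    have := (preconnected_iff B).1 hB.2.1.preconnected y hy x hx
    rw [hE] at this
    exact this.eq_of_empty
  obtain ⟨y, hxy⟩ := exists_adj hconn hadj x
  set B' : K.Subgraph := K.subgraphOfAdj hxy with hB'
  have hB'verts : B'.verts = {x, y} := rfl
  have hadj' : ∀ a b, a ∈ B'.verts → b ∈ B'.verts → a ≠ b → B'.Adj a b := by
    intro a b ha hb hab
    rw [hB'verts, Set.mem_insert_iff, Set.mem_singleton_iff] at ha hb
    show s(x, y) = s(a, b)
    rcases ha with rfl | rfl <;> rcases hb with rfl | rfl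
    · exact absurd rfl hab
    · rfl
    · exact Sym2.eq_swap
    · exact absurd rfl hab
  have hind' : B'.IsInduced := fun _ ha _ hb hab => hadj' _ _ ha hb hab.ne
  have hchain : ∀ z, ∀ a ∈ B'.verts, a ≠ z → ∀ b ∈ B'.verts, b ≠ z →
      ERel {e | e ∈ B'.edgeSet ∧ z ∉ e} a b := by
    intro z a ha haz b hb hbz
    rcases eq_or_ne a b with rfl | hab
    · exact .refl
    refine .single ⟨Subgraph.mem_edgeSet.2 (hadj' a b ha hb hab), ?_⟩
    rw [Sym2.mem_iff]
    rintro (rfl | rfl)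
    · exact haz rfl
    · exact hbz rfl
  have hconn' : B'.coe.Connected := by
    rw [connected_iff]
    refine ⟨?_, ⟨⟨x, by rw [hB'verts]; exact Set.mem_insert x {y}⟩⟩⟩
    rw [preconnected_iff]
    intro a ha b hb
    rcases eq_or_ne a b with rfl | hab
    · exact .refl
    · exact .single (Subgraph.mem_edgeSet.2 (hadj' a b ha hb hab))
  have hnocut : ∀ v, ¬ B'.IsCutVertex v := by
    intro v
    apply notCut_of
    intro a ha haz b hb hbz
    exact hchain v a ha haz b hb hbz
  have hBB' : B ≤ B' := by
    refine ⟨?_, ?_⟩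
    · intro z hz
      rw [hsingle z hz, hB'verts]
      exact Set.mem_insert x {y}
    · intro a b hab
      exact absurd (Subgraph.mem_edgeSet.2 hab) (by rw [hE]; exact Set.notMem_empty _)
  have hmax := hB.2.2.2 B' hind' hconn' hnocut hBB'
  refine hemp ⟨s(x, y), ?_⟩
  rw [hmax]
  refine Subgraph.mem_edgeSet.2 (hadj' x y ?_ ?_ hxy.ne)
  · rw [hB'verts]; exact Set.mem_insert x {y}
  · rw [hB'verts]; exact Set.mem_insert_iff.2 (Or.inr rfl)

lemma good_of_block {K : SimpleGraph V} {B : K.Subgraph} (hB : B.IsBlock) : Good B :=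
  ⟨hB.1, hB.2.1, hB.2.2.1⟩

namespace Setup
variable {V : Type*} [DecidableEq V] (S : Setup V)

lemma flip_isBlock {B : S.G.Subgraph} (hB : B.IsBlock) : (S.flip B).IsBlock := by
  have hGood := good_of_block hB
  have hfGood := S.flip_good hGood
  refine ⟨hfGood.1, hfGood.2.1, hfGood.2.2, ?_⟩
  intro C hCind hCconn hCcut hleC
  have hCGood : Good C := ⟨hCind, hCconn, hCcut⟩
  have hBe : B.edgeSet.Nonempty := block_edge S.hconn S.hadj hB
  have hle2 : B ≤ S.unflip C := S.flip_le hGood hBe hCGood hleC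
  have hg := S.symm.flip_good hCGood
  have hBC : B = S.unflip C := hB.2.2.2 (S.unflip C) hg.1 hg.2.1 hg.2.2 hle2
  calc S.flip B = S.flip (S.unflip C) := by rw [← hBC]
    _ = C := S.symm.flip_flip hCGood

end Setup


namespace Setup
variable {V : Type*} [DecidableEq V] (S : Setup V)

lemma cycle_glue_at_v1 (d : S.G.Walk S.v1 S.v1) (hd : d.IsCycle) (hv2 : S.v2 ∈ d.support) :
    ∃ (w : V) (d2 : S.G2.Walk w w), d2.IsCycle ∧
      (∀ f ∈ d2.edges, ∃ e ∈ d.edges, f = phiA S.v1 S.v2 S.H e) ∧ d2.length = d.length := by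
  cases d with
  | nil => exact absurd hd (by simp)
  | @cons _ x _ hadj q =>
    obtain ⟨hq, _hqe⟩ := (Walk.cons_isCycle_iff q hadj).1 hd
    have hv2q : S.v2 ∈ q.support := by
      rw [Walk.support_cons, List.mem_cons] at hv2
      rcases hv2 with h | h
      · exact absurd h.symm S.hne
      · exact h
    have hspec : (q.takeUntil S.v2 hv2q).append (q.dropUntil S.v2 hv2q) = q :=
      q.take_spec hv2q
    set P := q.takeUntil S.v2 hv2q with hPdef
    set Q := q.dropUntil S.v2 hv2q with hQdef
    have hPp : P.IsPath := hq.takeUntil hv2q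
    have hQp : Q.IsPath := hq.dropUntil hv2q
    have hsupp_split : q.support = P.support ++ Q.support.tail := by
      conv_lhs => rw [← hspec]
      exact Walk.support_append P Q
    have hnodup := hq.support_nodup
    rw [hsupp_split] at hnodup
    have hdisjPQ : List.Disjoint P.support Q.support.tail :=
      List.disjoint_of_nodup_append hnodup
    have hv1P : S.v1 ∉ P.support := by
      intro h
      have hv1Q : S.v1 ∈ Q.support := Q.end_mem_support
      rw [Walk.support_eq_cons] at hv1Q
      rcases List.mem_cons.1 hv1Q with h' | h'
      · exact S.hne h'
      · exact hdisjPQ h h'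
    set A1 : S.G.Walk S.v1 S.v2 := Walk.cons hadj P with hA1def
    have hA1p : A1.IsPath := (Walk.cons_isPath_iff hadj P).2 ⟨hPp, hv1P⟩
    have hsplit : Walk.cons hadj q = A1.append Q := by
      rw [hA1def, Walk.cons_append, hspec]
    rw [hsplit] at hd ⊢
    have hdisjE : List.Disjoint A1.edges Q.edges := by
      have := hd.isTrail.edges_nodup
      rw [Walk.edges_append] at this
      exact List.disjoint_of_nodup_append this
    have hsuppAQ : ∀ z ∈ A1.support, z ∈ Q.support → z = S.v1 ∨ z = S.v2 := by
      intro z hzA hzQ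
      rw [hA1def, Walk.support_cons, List.mem_cons] at hzA
      rcases hzA with rfl | hzP
      · exact Or.inl rfl
      · right
        rw [Walk.support_eq_cons] at hzQ
        rcases List.mem_cons.1 hzQ with h' | h'
        · exact h'
        · exact absurd (hdisjPQ hzP h') id
    have hlen_goal : A1.length + Q.length = (A1.append Q).length :=
      (Walk.length_append A1 Q).symm
    have hmemA : ∀ e ∈ A1.edges, e ∈ (A1.append Q).edges := by
      intro e he
      rw [Walk.edges_append, List.mem_append]
      exact Or.inl he
    have hmemQ : ∀ e ∈ Q.edges, e ∈ (A1.append Q).edges := by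
      intro e he
      rw [Walk.edges_append, List.mem_append]
      exact Or.inr he
    have hswl : Equiv.swap S.v1 S.v2 S.v1 = S.v2 := Equiv.swap_apply_left _ _
    have hswr : Equiv.swap S.v1 S.v2 S.v2 = S.v1 := Equiv.swap_apply_right _ _
    rcases S.arc rfl S.hne A1 hA1p with hA | hA <;>
      rcases S.arc (by rw [Set.pair_comm]) S.hne.symm Q hQp with hB | hB
    · -- both arcs inner
      refine ⟨S.v1, ((S.tIn Q hB).copy hswr hswl).append ((S.tIn A1 hA).copy hswl hswr),
        ?_, ?_, ?_⟩
      · refine glue S.hne _ _ ?_ ?_ ?_ ?_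
        · rw [Walk.isPath_copy]; exact S.tIn_isPath hQp hB
        · rw [Walk.isPath_copy]; exact S.tIn_isPath hA1p hA
        · intro e he2 he1
          rw [Walk.edges_copy, S.tIn_edges] at he2 he1
          obtain ⟨e2, he2', rfl⟩ := List.mem_map.1 he2
          obtain ⟨e1, he1', heq⟩ := List.mem_map.1 he1
          have : e1 = e2 := Sym2.map.injective (Equiv.injective _) heq
          subst this
          exact hdisjE he1' he2'
        · intro z hz2 hz1
          rw [Walk.support_copy, S.tIn_support] at hz2 hz1
          obtain ⟨z2, hz2', rfl⟩ := List.mem_map.1 hz2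
          obtain ⟨z1, hz1', heq⟩ := List.mem_map.1 hz1
          have : z1 = z2 := Equiv.injective _ heq
          subst this
          rcases hsuppAQ z1 hz1' hz2' with rfl | rfl
          · exact Or.inr hswl
          · exact Or.inl hswr
      · intro f hf
        rw [Walk.edges_append, List.mem_append, Walk.edges_copy, Walk.edges_copy] at hf
        rcases hf with hf | hf
        · obtain ⟨e, he, rfl⟩ := S.tIn_phi Q hB f hf
          exact ⟨e, hmemQ e he, rfl⟩
        · obtain ⟨e, he, rfl⟩ := S.tIn_phi A1 hA f hf
          exact ⟨e, hmemA e he, rfl⟩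
      · rw [Walk.length_append, Walk.length_copy, Walk.length_copy, S.tIn_length,
          S.tIn_length, ← hlen_goal]
        omega
    · -- A1 inner, Q outer
      refine ⟨S.v1, (S.tOut Q hB).reverse.append ((S.tIn A1 hA).copy hswl hswr),
        ?_, ?_, ?_⟩
      · refine glue S.hne _ _ ?_ ?_ ?_ ?_
        · exact (S.tOut_isPath hQp hB).reverse
        · rw [Walk.isPath_copy]; exact S.tIn_isPath hA1p hA
        · intro e he2 he1
          rw [Walk.edges_reverse, List.mem_reverse, S.tOut_edges] at he2
          rw [Walk.edges_copy] at he1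
          have hallE := S.tIn_all A1 hA e he1
          exact (hB e he2) hallE
        · intro z hz2 hz1
          rw [Walk.support_reverse, List.mem_reverse, S.tOut_support] at hz2
          rw [Walk.support_copy, S.tIn_support] at hz1
          obtain ⟨z1, hz1', rfl⟩ := List.mem_map.1 hz1
          rcases eq_or_ne z1 S.v1 with rfl | h1
          · exact Or.inr hswl
          rcases eq_or_ne z1 S.v2 with rfl | h2
          · exact Or.inl hswr
          · rw [Equiv.swap_apply_of_ne_of_ne h1 h2] at hz2 ⊢
            rcases hsuppAQ z1 hz1' hz2 with rfl | rfl
            · exact Or.inl rfl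
            · exact Or.inr rfl
      · intro f hf
        rw [Walk.edges_append, List.mem_append, Walk.edges_reverse, List.mem_reverse,
          Walk.edges_copy] at hf
        rcases hf with hf | hf
        · obtain ⟨e, he, rfl⟩ := S.tOut_phi Q hB f hf
          exact ⟨e, hmemQ e he, rfl⟩
        · obtain ⟨e, he, rfl⟩ := S.tIn_phi A1 hA f hf
          exact ⟨e, hmemA e he, rfl⟩
      · rw [Walk.length_append, Walk.length_reverse, Walk.length_copy, S.tOut_length,
          S.tIn_length, ← hlen_goal]
        omega
    · -- A1 outer, Q inner
      refine ⟨S.v1, (S.tOut A1 hA).append ((S.tIn Q hB).copy hswr hswl).reverse,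
        ?_, ?_, ?_⟩
      · refine glue S.hne _ _ ?_ ?_ ?_ ?_
        · exact S.tOut_isPath hA1p hA
        · exact (Walk.isPath_copy _ _ _ |>.2 (S.tIn_isPath hQp hB)).reverse
        · intro e he1 he2
          rw [S.tOut_edges] at he1
          rw [Walk.edges_reverse, List.mem_reverse, Walk.edges_copy] at he2
          have hallE := S.tIn_all Q hB e he2
          exact (hA e he1) hallE
        · intro z hz1 hz2
          rw [S.tOut_support] at hz1
          rw [Walk.support_reverse, List.mem_reverse, Walk.support_copy, S.tIn_support] at hz2
          obtain ⟨z2, hz2', rfl⟩ := List.mem_map.1 hz2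
          rcases eq_or_ne z2 S.v1 with rfl | h1
          · exact Or.inr hswl
          rcases eq_or_ne z2 S.v2 with rfl | h2
          · exact Or.inl hswr
          · rw [Equiv.swap_apply_of_ne_of_ne h1 h2] at hz1 ⊢
            rcases hsuppAQ z2 hz1 hz2' with rfl | rfl
            · exact Or.inl rfl
            · exact Or.inr rfl
      · intro f hf
        rw [Walk.edges_append, List.mem_append, Walk.edges_reverse, List.mem_reverse,
          Walk.edges_copy] at hf
        rcases hf with hf | hf
        · obtain ⟨e, he, rfl⟩ := S.tOut_phi A1 hA f hf
          exact ⟨e, hmemA e he, rfl⟩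
        · obtain ⟨e, he, rfl⟩ := S.tIn_phi Q hB f hf
          exact ⟨e, hmemQ e he, rfl⟩
      · rw [Walk.length_append, Walk.length_reverse, Walk.length_copy, S.tOut_length,
          S.tIn_length, ← hlen_goal]
    · -- both outer
      refine ⟨S.v1, (S.tOut A1 hA).append (S.tOut Q hB), ?_, ?_, ?_⟩
      · refine glue S.hne _ _ ?_ ?_ ?_ ?_
        · exact S.tOut_isPath hA1p hA
        · exact S.tOut_isPath hQp hB
        · intro e he1 he2
          rw [S.tOut_edges] at he1 he2
          exact hdisjE he1 he2
        · intro z hz1 hz2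
          rw [S.tOut_support] at hz1 hz2
          exact hsuppAQ z hz1 hz2
      · intro f hf
        rw [Walk.edges_append, List.mem_append] at hf
        rcases hf with hf | hf
        · obtain ⟨e, he, rfl⟩ := S.tOut_phi A1 hA f hf
          exact ⟨e, hmemA e he, rfl⟩
        · obtain ⟨e, he, rfl⟩ := S.tOut_phi Q hB f hf
          exact ⟨e, hmemQ e he, rfl⟩
      · rw [Walk.length_append, S.tOut_length, S.tOut_length, ← hlen_goal]

end Setup

lemma mem_support_rotate' {K : SimpleGraph V} [DecidableEq V] {u w : V} {c : K.Walk u u}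
    (hc : ¬ c.Nil) (h : w ∈ c.support) {x : V} (hx : x ∈ c.support) :
    x ∈ (c.rotate _ h).support := by
  have h1 : x ∈ c.support.tail := closed_mem_support_tail c hc hx
  have h2 := (c.support_rotate _ h).mem_iff.2 h1
  exact List.mem_of_mem_tail h2

lemma length_rotate' {K : SimpleGraph V} [DecidableEq V] {u w : V} (c : K.Walk u u)
    (h : w ∈ c.support) : (c.rotate _ h).length = c.length := by
  rw [← Walk.length_edges, ← Walk.length_edges, (c.rotate_edges _ h).perm.length_eq]

namespace Setup
variable {V : Type*} [DecidableEq V] (S : Setup V)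

lemma cycle_transfer_mixed {u : V} (c : S.G.Walk u u) (hc : c.IsCycle)
    (hv1 : S.v1 ∈ c.support) (hv2 : S.v2 ∈ c.support) :
    ∃ (w : V) (d : S.G2.Walk w w), d.IsCycle ∧
      (∀ f ∈ d.edges, ∃ e ∈ c.edges, f = phiA S.v1 S.v2 S.H e) ∧ d.length = c.length := by
  obtain ⟨w, d2, hcyc, hphi, hlen⟩ :=
    S.cycle_glue_at_v1 (c.rotate _ hv1) (hc.rotate hv1)
      (mem_support_rotate' hc.not_nil hv1 hv2)
  refine ⟨w, d2, hcyc, ?_, by rw [hlen, length_rotate']⟩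
  intro f hf
  obtain ⟨e, he, rfl⟩ := hphi f hf
  exact ⟨e, (c.rotate_edges _ hv1).mem_iff.1 he, rfl⟩

lemma cycle_transfer {u : V} (c : S.G.Walk u u) (hc : c.IsCycle) :
    ∃ (w : V) (d : S.G2.Walk w w), d.IsCycle ∧
      (∀ f ∈ d.edges, ∃ e ∈ c.edges, f = phiA S.v1 S.v2 S.H e) ∧ d.length = c.length := by
  by_cases hA : ∀ e ∈ c.edges, ∀ z ∈ e, z ∈ S.H
  · refine ⟨_, S.tIn c hA, ?_, S.tIn_phi c hA, S.tIn_length c hA⟩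
    have hinj : Function.Injective ⇑S.inHom := by
      rw [S.inHom_coe]
      exact (Equiv.swap _ _).injective
    exact (Walk.map_isCycle_iff_of_injective hinj).2 (hc.transfer _)
  by_cases hB : ∀ e ∈ c.edges, (∀ z ∈ e, z ∈ S.H) → e = s(S.v1, S.v2)
  · have hmem : ∀ e ∈ c.edges, e ∈ S.G2.edgeSet := by
      intro e he
      induction e using Sym2.ind with
      | _ x y =>
        by_cases hxy : x ∈ S.H ∧ y ∈ S.H
        · have h12 := hB _ he (S.sym2_all.2 hxy)
          rw [h12]
          exact S.hadj2
        · exact S.adj2_outer hxy (c.edges_subset_edgeSet he)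
    refine ⟨u, c.transfer S.G2 hmem, hc.transfer hmem, ?_, Walk.length_transfer c hmem⟩
    intro f hf
    rw [Walk.edges_transfer] at hf
    refine ⟨f, hf, ?_⟩
    induction f using Sym2.ind with
    | _ x y =>
      by_cases hxy : x ∈ S.H ∧ y ∈ S.H
      · have h12 := hB _ hf (S.sym2_all.2 hxy)
        rw [h12, phiA_pair_pos S.h1 S.h2, Equiv.swap_apply_left, Equiv.swap_apply_right,
          Sym2.eq_swap]
      · rw [phiA_pair_neg hxy]
  · -- mixed cycle
    push_neg at hA hB
    obtain ⟨e0, he0, hout0⟩ := hA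
    obtain ⟨e1, he1, hall1, hne1⟩ := hB
    -- an endpoint of e1 inside H, away from the gates
    obtain ⟨a, haE, haH, ha1, ha2⟩ : ∃ a, a ∈ e1 ∧ a ∈ S.H ∧ a ≠ S.v1 ∧ a ≠ S.v2 := by
      revert he1 hall1 hne1
      induction e1 using Sym2.ind with
      | _ a1 b1 =>
        intro he1 hall1 hne1
        have hab : a1 ≠ b1 := (c.edges_subset_edgeSet he1).ne
        have ha1H : a1 ∈ S.H := (S.sym2_all.1 hall1).1
        have hb1H : b1 ∈ S.H := (S.sym2_all.1 hall1).2
        rcases eq_or_ne a1 S.v1 with rfl | h11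
        · rcases eq_or_ne b1 S.v2 with rfl | h22
          · exact absurd rfl hne1
          · exact ⟨b1, Sym2.mem_mk_right _ _, hb1H, fun h => hab h.symm, h22⟩
        rcases eq_or_ne a1 S.v2 with rfl | h12
        · rcases eq_or_ne b1 S.v1 with rfl | h21
          · exact absurd Sym2.eq_swap hne1
          · exact ⟨b1, Sym2.mem_mk_right _ _, hb1H, h21, fun h => hab h.symm⟩
        · exact ⟨a1, Sym2.mem_mk_left _ _, ha1H, h11, h12⟩
    obtain ⟨b, hbE, hbH⟩ : ∃ b ∈ e0, b ∉ S.H := hout0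
    have hasupp : a ∈ c.support := mem_support_of_mem_edges c he1 haE
    have hbsupp : b ∈ c.support := mem_support_of_mem_edges c he0 hbE
    have hb1 : b ≠ S.v1 := fun h => hbH (h ▸ S.h1)
    have hb2 : b ≠ S.v2 := fun h => hbH (h ▸ S.h2)
    have hgate : ∀ z : V, ∀ x y : V, s(x, y) ∈ c.edges → x ∈ S.H → y ∉ S.H → x ≠ z →
        (x = S.v1 ∨ x = S.v2) := by
      intro z x y hxy hxH hyH _
      by_contra hcon
      push_neg at hcon
      exact hyH (S.hHedge x y (c.edges_subset_edgeSet hxy) hxH hcon.1 hcon.2)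
    -- v1 and v2 both lie on the cycle
    have hv1 : S.v1 ∈ c.support := by
      obtain ⟨x, y, ⟨hxy, hv2e⟩, hxH, hyH⟩ :=
        cross (cycle_avoid hc hasupp hbsupp ha2 hb2) haH hbH
      have hx2 : x ≠ S.v2 := fun h => hv2e (h ▸ Sym2.mem_mk_left x y)
      rcases hgate S.v2 x y hxy hxH hyH hx2 with rfl | rfl
      · exact mem_support_of_mem_edges c hxy (Sym2.mem_mk_left _ _)
      · exact absurd rfl hx2
    have hv2 : S.v2 ∈ c.support := by
      obtain ⟨x, y, ⟨hxy, hv1e⟩, hxH, hyH⟩ :=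
        cross (cycle_avoid hc hasupp hbsupp ha1 hb1) haH hbH
      have hx1 : x ≠ S.v1 := fun h => hv1e (h ▸ Sym2.mem_mk_left x y)
      rcases hgate S.v1 x y hxy hxH hyH hx1 with rfl | rfl
      · exact absurd rfl hx1
      · exact mem_support_of_mem_edges c hxy (Sym2.mem_mk_left _ _)
    exact S.cycle_transfer_mixed c hc hv1 hv2

lemma cycleSet_flip_subset {B : S.G.Subgraph} (hGood : Good B) :
    {n : ℕ | ∃ (u : V) (c : S.G.Walk u u), c.IsCycle ∧
        (∀ f ∈ c.edges, f ∈ B.edgeSet) ∧ c.length = n} ⊆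
      {n : ℕ | ∃ (u : V) (c : S.G2.Walk u u), c.IsCycle ∧
        (∀ f ∈ c.edges, f ∈ (S.flip B).edgeSet) ∧ c.length = n} := by
  obtain ⟨hind, hconn, hcut⟩ := hGood
  have hfE := S.flip_edgeSet hconn.preconnected hcut
  rintro n ⟨u, c, hc, hedges, rfl⟩
  obtain ⟨w, d, hdcyc, hphi, hlen⟩ := S.cycle_transfer c hc
  refine ⟨w, d, hdcyc, ?_, hlen⟩
  intro f hf
  obtain ⟨e, he, rfl⟩ := hphi f hf
  rw [hfE]
  exact ⟨e, hedges e he, rfl⟩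

lemma maxCycleLength_flip_eq {B : S.G.Subgraph} (hGood : Good B) :
    maxCycleLength B = maxCycleLength (S.flip B) := by
  unfold maxCycleLength
  congr 1
  refine Set.Subset.antisymm (S.cycleSet_flip_subset hGood) ?_
  have h2 := S.symm.cycleSet_flip_subset (B := S.flip B) (S.flip_good hGood)
  rwa [S.symm_flip, S.flip_flip hGood] at h2

end Setup

end WFAux

/-- for a connected simple graph `G` with at least one edge, the edge map
`phiA` of the Type A Whitney flip maps the edge set of each block of `G` bijectively onto
the edge set of a block of the flipped graph, inducing a bijection between blocks which
preserves the number of edges and the maximum cycle length. -/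
theorem typeAFlip_block_bijection {V : Type*} [Fintype V] [DecidableEq V]
    (G : SimpleGraph V) (hGconn : G.Connected) (hGedge : G.edgeSet.Nonempty)
    (v1 v2 : V) (hne : v1 ≠ v2) (hadj : G.Adj v1 v2)
    (H : Set V) (h1 : v1 ∈ H) (h2 : v2 ∈ H) (hHconn : (G.induce H).Connected)
    (hHedge : ∀ x y : V, G.Adj x y → x ∈ H \ ({v1, v2} : Set V) → y ∈ H) :
    (∀ B : G.Subgraph, B.IsBlock → ∃ B' : (typeAFlip G v1 v2 H).Subgraph, B'.IsBlock ∧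
        Set.BijOn (phiA v1 v2 H) B.edgeSet B'.edgeSet) ∧
      ∃ F : {B : G.Subgraph // B.IsBlock} ≃
          {B' : (typeAFlip G v1 v2 H).Subgraph // B'.IsBlock},
        ∀ B : {B : G.Subgraph // B.IsBlock},
          Set.BijOn (phiA v1 v2 H) B.1.edgeSet (F B).1.edgeSet ∧
          B.1.edgeSet.ncard = (F B).1.edgeSet.ncard ∧
          maxCycleLength B.1 = maxCycleLength (F B).1 := by
  let S : WFAux.Setup V :=
    { G := G
      G2 := typeAFlip G v1 v2 H
      v1 := v1
      v2 := v2
      H := H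
      hne := hne
      h1 := h1
      h2 := h2
      hadj := hadj
      hconn := hGconn
      hHedge := fun x y h hx hx1 hx2 => hHedge x y h
        ⟨hx, fun hm => (Set.mem_insert_iff.1 hm).elim hx1
          (fun h' => hx2 (Set.mem_singleton_iff.1 h'))⟩
      hflip := fun _ _ => Iff.rfl }
  have hinj : Function.Injective (phiA v1 v2 H) := WFAux.phiA_injective h1 h2
  have hbij : ∀ B : G.Subgraph, B.IsBlock →
      Set.BijOn (phiA v1 v2 H) B.edgeSet (S.flip B).edgeSet := by
    intro B hB
    have hGood := WFAux.good_of_block hB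
    have hfE := S.flip_edgeSet hGood.2.1.preconnected hGood.2.2
    rw [hfE]
    exact Set.InjOn.bijOn_image (fun x _ y _ h => hinj h)
  refine ⟨fun B hB => ⟨S.flip B, S.flip_isBlock hB, hbij B hB⟩, ?_⟩
  refine ⟨{ toFun := fun B => ⟨S.flip B.1, S.flip_isBlock B.2⟩
            invFun := fun C => ⟨S.unflip C.1, S.symm.flip_isBlock C.2⟩
            left_inv := fun B => Subtype.ext (S.flip_flip (WFAux.good_of_block B.2))
            right_inv := fun C => Subtype.ext (S.symm.flip_flip (WFAux.good_of_block C.2)) },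
    ?_⟩
  intro B
  have hGood := WFAux.good_of_block B.2
  have hfE := S.flip_edgeSet hGood.2.1.preconnected hGood.2.2
  refine ⟨hbij B.1 B.2, ?_, S.maxCycleLength_flip_eq hGood⟩
  show B.1.edgeSet.ncard = (S.flip B.1).edgeSet.ncard
  rw [hfE]
  exact (Set.ncard_image_of_injective _ hinj).symm
end
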